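/- arXiv:2101.06433 — 8 statements merged into one kernel-verified Lean document; each statement's English description precedes it below -/
import Mathlib

section
/- Let N, N₁, N₂, K be positive integers with N₁ + N₂ = N + 1. Let z₁,…,z_K ∈ ℂ with |z_k| = 1, s₁,…,s_K ∈ ℂ, and y ∈ ℂ^N with y_j = Σ_{k=1}^K s_k · z_k^{j−1}. Then J_{N₁} · conj(H(y)) · J_{N₂} = A_{N₁}(z) · conj(S) · Z^{1−N} · A_{N₂}(z)ᵀ, where S = diag(s₁,…,s_K) and Z = diag(z₁,…,z_K), and consequently the double Hankel matrix D(y) = [H(y) | J_{N₁}·conj(H(y))·J_{N₂}] satisfies rank(D(y)) ≤ K. -/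
open Matrix

/-- The `N₁ × N₂` Hankel matrix of a signal `y ∈ ℂ^N`, where `N₁ + N₂ = N + 1`. -/
noncomputable def hankelM {N : ℕ} (N₁ N₂ : ℕ) (h : N₁ + N₂ = N + 1) (y : Fin N → ℂ) :
    Matrix (Fin N₁) (Fin N₂) ℂ :=
  fun j l => y ⟨j.1 + l.1, by have := j.2; have := l.2; omega⟩

/-- The `m × K` Vandermonde matrix with nodes `z`. -/
noncomputable def vandM (m : ℕ) {K : ℕ} (z : Fin K → ℂ) : Matrix (Fin m) (Fin K) ℂ :=
  fun n k => z k ^ (n : ℕ)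

/-- The `m × m` reversal matrix `J_m`, with ones on the anti-diagonal. -/
noncomputable def revM (m : ℕ) : Matrix (Fin m) (Fin m) ℂ :=
  fun i j => if i.1 + j.1 + 1 = m then 1 else 0

/-- The double Hankel matrix `D(y) = [H(y) | J_{N₁} ⬝ conj(H(y)) ⬝ J_{N₂}]`. -/
noncomputable def dHankel {N : ℕ} (N₁ N₂ : ℕ) (h : N₁ + N₂ = N + 1) (y : Fin N → ℂ) :
    Matrix (Fin N₁) (Fin N₂ ⊕ Fin N₂) ℂ :=
  Matrix.fromCols (hankelM N₁ N₂ h y)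
    (revM N₁ * (hankelM N₁ N₂ h y).map (starRingEnd ℂ) * revM N₂)
lemma revM_mul_apply {m n : ℕ} (A : Matrix (Fin m) (Fin n) ℂ) (i : Fin m) (j : Fin n) :
    (revM m * A) i j = A i.rev j := by
  rw [Matrix.mul_apply]
  rw [Finset.sum_eq_single i.rev]
  · simp [revM, Fin.rev]; intro hc; omega
  · intro b _ hb
    have : ¬ ((i : ℕ) + b + 1 = m) := by
      intro hc
      apply hb
      ext
      simp [Fin.rev]; omega
    simp [revM, this]
  · simp

lemma mul_revM_apply {m n : ℕ} (A : Matrix (Fin m) (Fin n) ℂ) (i : Fin m) (j : Fin n) :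
    (A * revM n) i j = A i j.rev := by
  rw [Matrix.mul_apply]
  rw [Finset.sum_eq_single j.rev]
  · simp [revM, Fin.rev]; intro hc; omega
  · intro b _ hb
    have : ¬ ((b : ℕ) + j + 1 = n) := by
      intro hc
      apply hb
      ext
      simp [Fin.rev]; omega
    simp [revM, this]
  · simp

theorem statement2 (N N₁ N₂ K : ℕ) (hN : 0 < N) (hN₁ : 0 < N₁) (hN₂ : 0 < N₂) (hK : 0 < K)
    (h : N₁ + N₂ = N + 1) (z s : Fin K → ℂ) (hz : ∀ k, ‖z k‖ = 1)
    (y : Fin N → ℂ) (hy : ∀ j : Fin N, y j = ∑ k, s k * z k ^ (j : ℕ)) :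
    revM N₁ * (hankelM N₁ N₂ h y).map (starRingEnd ℂ) * revM N₂ =
      vandM N₁ z * Matrix.diagonal (fun k => starRingEnd ℂ (s k)) *
        Matrix.diagonal (fun k => z k ^ ((1 : ℤ) - (N : ℤ))) * (vandM N₂ z)ᵀ ∧
      (dHankel N₁ N₂ h y).rank ≤ K := by
  have hz0 : ∀ k, z k ≠ 0 := by
    intro k hk
    have := hz k; rw [hk] at this; simp at this
  have hconj : ∀ k, starRingEnd ℂ (z k) = (z k)⁻¹ := by
    intro k
    have hns : Complex.normSq (z k) = 1 := by
      rw [← Complex.sq_norm, hz k]; norm_num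
    rw [Complex.inv_def, hns]; simp
  have key : revM N₁ * (hankelM N₁ N₂ h y).map (starRingEnd ℂ) * revM N₂ =
      vandM N₁ z * Matrix.diagonal (fun k => starRingEnd ℂ (s k)) *
        Matrix.diagonal (fun k => z k ^ ((1 : ℤ) - (N : ℤ))) * (vandM N₂ z)ᵀ := by
    ext i j
    rw [mul_revM_apply, revM_mul_apply]
    have hrhs : (vandM N₁ z * Matrix.diagonal (fun k => starRingEnd ℂ (s k)) *
        Matrix.diagonal (fun k => z k ^ ((1 : ℤ) - (N : ℤ))) * (vandM N₂ z)ᵀ) i j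
        = ∑ k, z k ^ (i : ℕ) * starRingEnd ℂ (s k) * z k ^ ((1 : ℤ) - (N : ℤ)) * z k ^ (j : ℕ) := by
      rw [Matrix.mul_apply]
      simp only [Matrix.mul_diagonal]
      apply Finset.sum_congr rfl
      intro k _
      simp [vandM, Matrix.transpose_apply]
    rw [hrhs]
    simp only [Matrix.map_apply, hankelM, hy]
    rw [map_sum]
    simp only [_root_.map_mul]
    apply Finset.sum_congr rfl
    intro k _
    rw [map_pow, hconj, inv_pow, ← zpow_natCast (z k), ← _root_.zpow_neg]
    have hi : (i : ℕ) < N₁ := i.2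
    have hj : (j : ℕ) < N₂ := j.2
    have harg : (-(((i.rev : ℕ) + (j.rev : ℕ) : ℕ) : ℤ)) =
        ((i : ℕ) : ℤ) + ((1 : ℤ) - (N : ℤ)) + ((j : ℕ) : ℤ) := by
      simp [Fin.rev]
      push_cast [Nat.cast_sub (by omega : (i : ℕ) + 1 ≤ N₁), Nat.cast_sub (by omega : (j : ℕ) + 1 ≤ N₂)]
      omega
    rw [harg]
    rw [zpow_add₀ (hz0 k), zpow_add₀ (hz0 k)]
    push_cast
    rw [zpow_natCast, zpow_natCast]
    ring
  refine ⟨key, ?_⟩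
  have hH : hankelM N₁ N₂ h y =
      vandM N₁ z * (Matrix.diagonal s * (vandM N₂ z)ᵀ) := by
    ext i j
    rw [Matrix.mul_apply]
    simp only [hankelM, hy]
    apply Finset.sum_congr rfl
    intro k _
    rw [Matrix.diagonal_mul, Matrix.transpose_apply]
    simp [vandM, pow_add]
    ring
  have hD : dHankel N₁ N₂ h y = vandM N₁ z * Matrix.fromCols
      (Matrix.diagonal s * (vandM N₂ z)ᵀ)
      (Matrix.diagonal (fun k => starRingEnd ℂ (s k)) *
        Matrix.diagonal (fun k => z k ^ ((1 : ℤ) - (N : ℤ))) * (vandM N₂ z)ᵀ) := by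
    rw [Matrix.mul_fromCols, dHankel, key, ← hH, Matrix.mul_assoc, Matrix.mul_assoc]
    congr 1
    rw [Matrix.mul_assoc]
  rw [hD]
  calc (vandM N₁ z * _).rank ≤ (vandM N₁ z).rank := Matrix.rank_mul_le_left _ _
    _ ≤ K := by simpa using Matrix.rank_le_card_width (vandM N₁ z)
end

section
/- Let N, K, K' be positive integers with N ≥ K + K'. Let z₁,…,z_K ∈ ℂ be pairwise distinct with s₁,…,s_K ∈ ℂ all nonzero, and let w₁,…,w_{K'} ∈ ℂ be pairwise distinct with t₁,…,t_{K'} ∈ ℂ all nonzero. If Σ_{k=1}^K s_k · z_k^{j−1} = Σ_{k=1}^{K'} t_k · w_k^{j−1} for all j = 1,…,N, then K = K' and there exists a permutation π of {1,…,K} such that w_{π(k)} = z_k and t_{π(k)} = s_k for all k. In other words, a signal of length N admits at most one decomposition into at most K complex exponentials with distinct poles and nonzero amplitudes when N ≥ 2K. -/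
open Finset

lemma vand_zero {M : ℕ} (u : Fin M → ℂ) (hu : Function.Injective u) (c : Fin M → ℂ)
    (h : ∀ j : Fin M, ∑ i, c i * u i ^ (j : ℕ) = 0) : ∀ i, c i = 0 := by
  have hdet : (Matrix.vandermonde u).transpose.det ≠ 0 := by
    rw [Matrix.det_transpose, Matrix.det_vandermonde]
    refine Finset.prod_ne_zero_iff.2 fun i _ => Finset.prod_ne_zero_iff.2 fun j hj => ?_
    have hij : i ≠ j := ne_of_lt (Finset.mem_Ioi.1 hj)
    exact sub_ne_zero.2 fun e => hij (hu e.symm)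
  have hA : (Matrix.vandermonde u).transpose.mulVec c = 0 := by
    funext j
    have := h j
    simpa [Matrix.mulVec, dotProduct, Matrix.vandermonde, mul_comm] using this
  intro i
  have := Matrix.eq_zero_of_mulVec_eq_zero hdet hA
  exact congrFun this i

lemma fiber_sum {K : ℕ} (z : Fin K → ℂ) (s : Fin K → ℂ) (T : Finset ℂ)
    (hT : ∀ k, z k ∈ T) (j : ℕ) :
    ∑ x ∈ T, (∑ k ∈ univ.filter (fun k => z k = x), s k) * x ^ j
      = ∑ k, s k * z k ^ j := by
  have h1 : ∀ x ∈ T, (∑ k ∈ univ.filter (fun k => z k = x), s k) * x ^ j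
      = ∑ k ∈ univ.filter (fun k => z k = x), s k * z k ^ j := by
    intro x _
    rw [Finset.sum_mul]
    exact Finset.sum_congr rfl fun k hk => by rw [(Finset.mem_filter.1 hk).2]
  rw [Finset.sum_congr rfl h1, Finset.sum_fiberwise_of_maps_to (fun k _ => hT k)]

theorem statement5 (N K K' : ℕ) (hN : 0 < N) (hK : 0 < K) (hK' : 0 < K')
    (hNKK' : K + K' ≤ N)
    (z : Fin K → ℂ) (hz : Function.Injective z) (s : Fin K → ℂ) (hs : ∀ k, s k ≠ 0)
    (w : Fin K' → ℂ) (hw : Function.Injective w) (t : Fin K' → ℂ) (ht : ∀ k, t k ≠ 0)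
    (h : ∀ j : Fin N, ∑ k, s k * z k ^ (j : ℕ) = ∑ k, t k * w k ^ (j : ℕ)) :
    K = K' ∧ ∃ π : Fin K ≃ Fin K', ∀ k, w (π k) = z k ∧ t (π k) = s k := by
  classical
  set T : Finset ℂ := (univ.image z) ∪ (univ.image w) with hT
  set c : ℂ → ℂ := fun x => (∑ k ∈ univ.filter (fun k => z k = x), s k)
      - (∑ k ∈ univ.filter (fun k => w k = x), t k) with hc
  have hzT : ∀ k, z k ∈ T := fun k => Finset.mem_union_left _ (Finset.mem_image_of_mem z (mem_univ k))
  have hwT : ∀ k, w k ∈ T := fun k => Finset.mem_union_right _ (Finset.mem_image_of_mem w (mem_univ k))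
  have hcard : T.card ≤ N := by
    refine le_trans (le_trans (Finset.card_union_le _ _) ?_) hNKK'
    exact add_le_add (le_trans Finset.card_image_le (by simp))
      (le_trans Finset.card_image_le (by simp))
  have hsum : ∀ j : ℕ, j < N → ∑ x ∈ T, c x * x ^ j = 0 := by
    intro j hj
    have : ∑ x ∈ T, c x * x ^ j
        = ∑ x ∈ T, ((∑ k ∈ univ.filter (fun k => z k = x), s k) * x ^ j
          - (∑ k ∈ univ.filter (fun k => w k = x), t k) * x ^ j) := by
      refine Finset.sum_congr rfl fun x _ => ?_
      simp [hc, sub_mul]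
    rw [this, Finset.sum_sub_distrib, fiber_sum z s T hzT j, fiber_sum w t T hwT j,
      h ⟨j, hj⟩, sub_self]
  -- all coefficients vanish
  have hczero : ∀ x ∈ T, c x = 0 := by
    set e := T.equivFin with he
    set u : Fin T.card → ℂ := fun i => ((e.symm i : T) : ℂ) with hu
    have hu_inj : Function.Injective u := by
      intro a b hab
      exact e.symm.injective (Subtype.ext hab)
    have hv : ∀ j : Fin T.card, ∑ i, c (u i) * u i ^ (j : ℕ) = 0 := by
      intro j
      have h1 : ∑ i, c (u i) * u i ^ (j : ℕ)
          = ∑ x : T, c (x : ℂ) * (x : ℂ) ^ (j : ℕ) :=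
        Equiv.sum_comp e.symm (fun x : T => c (x : ℂ) * (x : ℂ) ^ (j : ℕ))
      rw [h1, Finset.sum_coe_sort T (fun x => c x * x ^ (j : ℕ))]
      exact hsum j (lt_of_lt_of_le j.2 hcard)
    have := vand_zero u hu_inj (fun i => c (u i)) hv
    intro x hx
    have := this (e ⟨x, hx⟩)
    simpa [hu] using this
  -- evaluate c at z k and w k'
  have hz_eval : ∀ k, ∑ k' ∈ univ.filter (fun k' => w k' = z k), t k' = s k := by
    intro k
    have h0 := hczero (z k) (hzT k)
    have hfil : univ.filter (fun k' => z k' = z k) = {k} := by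
      ext a; simp [hz.eq_iff]
    rw [hc] at h0
    simp only [hfil, Finset.sum_singleton] at h0
    exact (sub_eq_zero.1 h0).symm
  have hw_eval : ∀ k', ∑ k ∈ univ.filter (fun k => z k = w k'), s k = t k' := by
    intro k'
    have h0 := hczero (w k') (hwT k')
    have hfil : univ.filter (fun a => w a = w k') = {k'} := by
      ext a; simp [hw.eq_iff]
    rw [hc] at h0
    simp only [hfil, Finset.sum_singleton] at h0
    exact sub_eq_zero.1 h0
  -- forward map
  have hex : ∀ k, ∃ k', w k' = z k ∧ t k' = s k := by
    intro k
    have hne : (univ.filter (fun k' => w k' = z k)).Nonempty := by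
      by_contra hcon
      rw [Finset.not_nonempty_iff_eq_empty] at hcon
      have := hz_eval k
      rw [hcon, Finset.sum_empty] at this
      exact hs k this.symm
    obtain ⟨k', hk'⟩ := hne
    have hwk : w k' = z k := (Finset.mem_filter.1 hk').2
    refine ⟨k', hwk, ?_⟩
    have hfil : univ.filter (fun a => w a = z k) = {k'} := by
      ext a; simp [← hwk, hw.eq_iff]
    have := hz_eval k
    rwa [hfil, Finset.sum_singleton] at this
  have hex' : ∀ k', ∃ k, z k = w k' := by
    intro k'
    have hne : (univ.filter (fun k => z k = w k')).Nonempty := by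
      by_contra hcon
      rw [Finset.not_nonempty_iff_eq_empty] at hcon
      have := hw_eval k'
      rw [hcon, Finset.sum_empty] at this
      exact ht k' this.symm
    obtain ⟨k, hk⟩ := hne
    exact ⟨k, (Finset.mem_filter.1 hk).2⟩
  set π : Fin K → Fin K' := fun k => Classical.choose (hex k) with hπ
  have hπ1 : ∀ k, w (π k) = z k := fun k => (Classical.choose_spec (hex k)).1
  have hπ2 : ∀ k, t (π k) = s k := fun k => (Classical.choose_spec (hex k)).2
  set σ : Fin K' → Fin K := fun k' => Classical.choose (hex' k') with hσ
  have hσ1 : ∀ k', z (σ k') = w k' := fun k' => Classical.choose_spec (hex' k')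
  have hli : Function.LeftInverse σ π := by
    intro k
    apply hz
    rw [hσ1, hπ1]
  have hri : Function.RightInverse σ π := by
    intro k'
    apply hw
    rw [hπ1, hσ1]
  exact ⟨by simpa using Fintype.card_congr (⟨π, σ, hli, hri⟩ : Fin K ≃ Fin K'),
    ⟨⟨π, σ, hli, hri⟩, fun k => ⟨hπ1 k, hπ2 k⟩⟩⟩
end

section
/- Let N, K be positive integers with N ≥ 2K + 1. Let y ∈ ℂ^N satisfy y_j = Σ_{k=1}^K s_k · z_k^{j−1} for all j, where z₁,…,z_K are pairwise distinct nonzero complex numbers and s₁,…,s_K are all nonzero. Suppose in addition that the conjugated-backward signal y̆, defined by y̆_j = conj(y_{N−j+1}), satisfies y̆_j = Σ_{k=1}^K s'_k · (z'_k)^{j−1} for all j, where z'₁,…,z'_K are pairwise distinct nonzero complex numbers and s'₁,…,s'_K are all nonzero. Then there exists a permutation π of {1,…,K} such that z_k = 1/conj(z'_{π(k)}) and s_k = conj(s'_{π(k)} · (z'_{π(k)})^{N−1}) for all k. In particular, the map z ↦ 1/conj(z) sends the pole set {z'₁,…,z'_K} bijectively onto {z₁,…,z_K}. -/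
/-- The conjugated-backward signal `y̆` of `y ∈ ℂ^N`: `y̆_j = conj (y_{N-j+1})`
(in 0-based indexing, `y̆_j = conj (y_{N-1-j})`). -/
noncomputable def conjBack {N : ℕ} (y : Fin N → ℂ) : Fin N → ℂ :=
  fun j => starRingEnd ℂ (y j.rev)

/-- Uniqueness of exponential sums: if two exponential sums with `K` terms each agree on
`j = 0, ..., N-1` with `N ≥ 2K`, their (node, coefficient) data coincide up to permutation. -/
lemma exp_sum_uniq {K N : ℕ} (hN : 2 * K ≤ N)
    (z s w b : Fin K → ℂ) (hz : Function.Injective z) (hw : Function.Injective w)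
    (hs : ∀ k, s k ≠ 0)
    (heq : ∀ j : ℕ, j < N → ∑ k, s k * z k ^ j = ∑ k, b k * w k ^ j) :
    ∃ π : Equiv.Perm (Fin K), ∀ k, z k = w (π k) ∧ s k = b (π k) := by
  classical
  set T : Finset ℂ := (Finset.univ.image z) ∪ (Finset.univ.image w) with hT
  set c : ℂ → ℂ := fun x =>
    (∑ k, if z k = x then s k else 0) - ∑ k, if w k = x then b k else 0 with hc
  have hzT : ∀ k, z k ∈ T := fun k =>
    Finset.mem_union_left _ (Finset.mem_image_of_mem _ (Finset.mem_univ k))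
  have hwT : ∀ k, w k ∈ T := fun k =>
    Finset.mem_union_right _ (Finset.mem_image_of_mem _ (Finset.mem_univ k))
  have hTcard : T.card ≤ 2 * K := by
    calc T.card ≤ (Finset.univ.image z).card + (Finset.univ.image w).card :=
          Finset.card_union_le _ _
      _ ≤ K + K := by
          gcongr <;> exact Finset.card_image_le.trans (by simp)
      _ = 2 * K := by ring
  -- a generic "collapse" computation
  have collapse : ∀ (u v : Fin K → ℂ), Function.Injective u → (∀ k, u k ∈ T) →
      ∀ j : ℕ, ∑ x ∈ T, (∑ k, if u k = x then v k else 0) * x ^ j = ∑ k, v k * u k ^ j := by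
    intro u v hu huT j
    calc ∑ x ∈ T, (∑ k, if u k = x then v k else 0) * x ^ j
        = ∑ x ∈ T, ∑ k, if u k = x then v k * x ^ j else 0 := by
          refine Finset.sum_congr rfl fun x _ => ?_
          rw [Finset.sum_mul]
          exact Finset.sum_congr rfl fun k _ => by split <;> simp
      _ = ∑ k, ∑ x ∈ T, if u k = x then v k * x ^ j else 0 := Finset.sum_comm
      _ = ∑ k, v k * u k ^ j := by
          refine Finset.sum_congr rfl fun k _ => ?_
          rw [Finset.sum_ite_eq T (u k) (fun x => v k * x ^ j), if_pos (huT k)]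
  have hsum : ∀ j : ℕ, j < N → ∑ x ∈ T, c x * x ^ j = 0 := by
    intro j hj
    have : ∑ x ∈ T, c x * x ^ j =
        (∑ x ∈ T, (∑ k, if z k = x then s k else 0) * x ^ j) -
        ∑ x ∈ T, (∑ k, if w k = x then b k else 0) * x ^ j := by
      rw [← Finset.sum_sub_distrib]
      exact Finset.sum_congr rfl fun x _ => by rw [hc]; ring
    rw [this, collapse z s hz hzT j, collapse w b hw hwT j, heq j hj, sub_self]
  -- Vandermonde: conclude c vanishes on T
  have hczero : ∀ x ∈ T, c x = 0 := by
    set m := T.card with hm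
    have hmN : m ≤ N := hTcard.trans hN
    set t : Fin m → ℂ := fun i => (T.equivFin.symm i : ℂ) with htdef
    have ht : Function.Injective t := fun i j h => by
      exact T.equivFin.symm.injective (Subtype.ext h)
    have hdet : (Matrix.vandermonde t).transpose.det ≠ 0 := by
      rw [Matrix.det_transpose]
      exact Matrix.det_vandermonde_ne_zero_iff.mpr ht
    set v : Fin m → ℂ := fun i => c (t i) with hv
    have hmv : (Matrix.vandermonde t).transpose.mulVec v = 0 := by
      funext i
      have key : ∑ j', t j' ^ (i : ℕ) * v j' = ∑ x ∈ T, c x * x ^ (i : ℕ) := by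
        rw [← Finset.sum_coe_sort T (fun x => c x * x ^ (i : ℕ))]
        rw [← Equiv.sum_comp T.equivFin.symm
          (fun x : T => c (x : ℂ) * (x : ℂ) ^ (i : ℕ))]
        exact Finset.sum_congr rfl fun j' _ => by rw [hv]; ring
      have := hsum i (lt_of_lt_of_le i.isLt hmN)
      simp only [Matrix.mulVec, dotProduct, Matrix.transpose_apply,
        Matrix.vandermonde_apply, Pi.zero_apply]
      rw [key, this]
    have hinj : Function.Injective ((Matrix.vandermonde t).transpose.mulVec) :=
      Matrix.mulVec_injective_iff_isUnit.mpr
        ((Matrix.isUnit_iff_isUnit_det _).mpr (Ne.isUnit hdet))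
    have hv0 : v = 0 := by
      apply hinj
      rw [hmv, Matrix.mulVec_zero]
    intro x hx
    have : c (t (T.equivFin ⟨x, hx⟩)) = 0 := by
      have := congrFun hv0 (T.equivFin ⟨x, hx⟩)
      simpa [hv] using this
    simpa [htdef] using this
  -- extract the matching
  have hmatch : ∀ k, s k = ∑ j, if w j = z k then b j else 0 := by
    intro k
    have h0 := hczero (z k) (hzT k)
    have h1 : (∑ k', if z k' = z k then s k' else 0) = s k := by
      rw [Finset.sum_eq_single k (fun k' _ hk' => if_neg fun h => hk' (hz h))
        (fun h => absurd (Finset.mem_univ k) h)]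
      simp
    rw [hc] at h0
    simp only at h0
    rw [h1, sub_eq_zero] at h0
    exact h0
  have hex : ∀ k, ∃ j, w j = z k := by
    intro k
    by_contra h
    push_neg at h
    have := hmatch k
    rw [Finset.sum_eq_zero (fun j _ => if_neg (h j))] at this
    exact hs k this
  choose π0 hπ0 using hex
  have hsb : ∀ k, s k = b (π0 k) := by
    intro k
    rw [hmatch k, Finset.sum_eq_single (π0 k)
      (fun j _ hj => if_neg fun h => hj (hw (h.trans (hπ0 k).symm)))
      (fun h => absurd (Finset.mem_univ _) h), if_pos (hπ0 k)]
  have hπinj : Function.Injective π0 := by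
    intro k1 k2 h
    apply hz
    rw [← hπ0 k1, ← hπ0 k2, h]
  refine ⟨Equiv.ofBijective π0 (Finite.injective_iff_bijective.mp hπinj), fun k => ?_⟩
  exact ⟨(hπ0 k).symm, hsb k⟩

theorem statement6 (N K : ℕ) (hK : 0 < K) (hN : 2 * K + 1 ≤ N)
    (z s : Fin K → ℂ) (hz : Function.Injective z) (hz0 : ∀ k, z k ≠ 0)
    (hs : ∀ k, s k ≠ 0)
    (z' s' : Fin K → ℂ) (hz' : Function.Injective z') (hz'0 : ∀ k, z' k ≠ 0)
    (hs' : ∀ k, s' k ≠ 0)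
    (y : Fin N → ℂ) (hy : ∀ j : Fin N, y j = ∑ k, s k * z k ^ (j : ℕ))
    (hyb : ∀ j : Fin N, conjBack y j = ∑ k, s' k * z' k ^ (j : ℕ)) :
    ∃ π : Equiv.Perm (Fin K), ∀ k,
      z k = (starRingEnd ℂ (z' (π k)))⁻¹ ∧
      s k = starRingEnd ℂ (s' (π k) * z' (π k) ^ (N - 1)) := by
  classical
  set w : Fin K → ℂ := fun k => (starRingEnd ℂ (z' k))⁻¹ with hw
  set b : Fin K → ℂ := fun k => starRingEnd ℂ (s' k * z' k ^ (N - 1)) with hb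
  have hwinj : Function.Injective w := by
    intro k1 k2 h
    apply hz'
    have := inv_injective h
    exact star_injective this
  have heq : ∀ j : ℕ, j < N → ∑ k, s k * z k ^ j = ∑ k, b k * w k ^ j := by
    intro j hj
    set jf : Fin N := ⟨j, hj⟩ with hjf
    have h1 : conjBack y jf.rev = ∑ k, s' k * z' k ^ ((jf.rev : ℕ)) := hyb jf.rev
    have h2 : conjBack y jf.rev = starRingEnd ℂ (y jf) := by
      rw [conjBack, Fin.rev_rev]
    have h3 : y jf = ∑ k, starRingEnd ℂ (s' k) * (starRingEnd ℂ (z' k)) ^ ((jf.rev : ℕ)) := by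
      have := h2.symm.trans h1
      apply (starRingEnd ℂ).injective
      rw [this, map_sum]
      exact Finset.sum_congr rfl fun k _ => by rw [map_mul, map_pow]; simp
    have hrev : ((jf.rev : ℕ)) = N - 1 - j := by
      simp [Fin.rev, hjf]
      omega
    have h4 : ∀ k, starRingEnd ℂ (s' k) * (starRingEnd ℂ (z' k)) ^ ((jf.rev : ℕ)) =
        b k * w k ^ j := by
      intro k
      have hzk : starRingEnd ℂ (z' k) ≠ 0 := by
        simp [hz'0 k]
      have hjle : j ≤ N - 1 := by omega
      rw [hrev, hb, hw]
      simp only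
      rw [map_mul, map_pow]
      rw [pow_sub₀ _ hzk hjle, ← inv_pow]
      ring
    rw [← hy jf, h3]
    exact Finset.sum_congr rfl fun k _ => h4 k
  obtain ⟨π, hπ⟩ := exp_sum_uniq (by omega) z s w b hz hwinj hs heq
  exact ⟨π, fun k => ⟨(hπ k).1, (hπ k).2⟩⟩
end

section
/- Let N, N₁, N₂, K be positive integers with N₁ + N₂ = N + 1. Let z₁,…,z_L be pairwise distinct nonzero complex numbers with L ≤ K, such that the set {z₁,…,z_L} is closed under the map z ↦ 1/conj(z) (i.e., for each k, either |z_k| = 1 or 1/conj(z_k) also belongs to the set). Let s₁,…,s_L ∈ ℂ and y ∈ ℂ^N with y_j = Σ_{k=1}^L s_k · z_k^{j−1}. Then the double Hankel matrix D(y) = [H(y) | J_{N₁}·conj(H(y))·J_{N₂}] satisfies rank(D(y)) ≤ K. -/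
open Matrix

lemma rev_mul_rev {m n : ℕ} (hm : 0 < m) (hn : 0 < n) (M : Matrix (Fin m) (Fin n) ℂ)
    (j : Fin m) (l : Fin n) :
    (revM m * M * revM n) j l = M ⟨m - 1 - j.1, by omega⟩ ⟨n - 1 - l.1, by omega⟩ := by
  have hj := j.2
  have hl := l.2
  have h1 : ∀ b, (revM m * M) j b = M ⟨m - 1 - j.1, by omega⟩ b := by
    intro b
    rw [Matrix.mul_apply]
    rw [Finset.sum_eq_single (⟨m - 1 - j.1, by omega⟩ : Fin m)]
    · have : j.1 + (m - 1 - j.1) + 1 = m := by omega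
      simp [revM, this]
    · intro a _ ha
      have : ¬ (j.1 + a.1 + 1 = m) := by
        intro hc; apply ha; exact Fin.ext (show a.1 = m - 1 - j.1 by omega)
      simp [revM, this]
    · simp
  rw [Matrix.mul_apply]
  simp_rw [h1]
  rw [Finset.sum_eq_single (⟨n - 1 - l.1, by omega⟩ : Fin n)]
  · have : (n - 1 - l.1) + l.1 + 1 = n := by omega
    simp [revM, this]
  · intro b _ hb
    have : ¬ (b.1 + l.1 + 1 = n) := by
      intro hc; apply hb; exact Fin.ext (show b.1 = n - 1 - l.1 by omega)
    simp [revM, this]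
  · simp

theorem statement7 (N N₁ N₂ K L : ℕ) (hN : 0 < N) (hN₁ : 0 < N₁) (hN₂ : 0 < N₂)
    (hK : 0 < K) (hL : 0 < L) (hLK : L ≤ K) (h : N₁ + N₂ = N + 1)
    (z : Fin L → ℂ) (hz : Function.Injective z) (hz0 : ∀ k, z k ≠ 0)
    (hclosed : ∀ k, ∃ k', z k' = (starRingEnd ℂ (z k))⁻¹)
    (s : Fin L → ℂ) (y : Fin N → ℂ)
    (hy : ∀ j : Fin N, y j = ∑ k, s k * z k ^ (j : ℕ)) :
    (dHankel N₁ N₂ h y).rank ≤ K := by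
  classical
  set σ : Fin L → Fin L := fun k => (hclosed k).choose with hσdef
  have hσ : ∀ k, z (σ k) = ((starRingEnd ℂ) (z k))⁻¹ := fun k => (hclosed k).choose_spec
  set t : Fin L → ℂ := fun k => (starRingEnd ℂ) (s k) * ((starRingEnd ℂ) (z k)) ^ (N - 1)
    with htdef
  set c : Fin L → ℂ := fun m => ∑ k, if σ k = m then t k else 0 with hcdef
  set E : Matrix (Fin N₁) (Fin L) ℂ := fun j k => z k ^ j.1 with hEdef
  set F : Matrix (Fin L) (Fin N₂ ⊕ Fin N₂) ℂ :=
    fun k x => Sum.elim (fun l : Fin N₂ => s k * z k ^ l.1)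
      (fun l : Fin N₂ => c k * z k ^ l.1) x with hFdef
  have key : dHankel N₁ N₂ h y = E * F := by
    ext j x
    cases x with
    | inl l =>
      simp only [dHankel, Matrix.fromCols_apply_inl, hankelM, Matrix.mul_apply,
        hEdef, hFdef, Sum.elim_inl]
      rw [hy]
      apply Finset.sum_congr rfl
      intro k _
      simp [pow_add]; ring
    | inr l =>
      simp only [dHankel, Matrix.fromCols_apply_inr]
      rw [rev_mul_rev hN₁ hN₂]
      simp only [Matrix.map_apply, hankelM]
      rw [hy, map_sum]
      have hLHS : ∀ k, E j k * F k (Sum.inr l)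
          = ∑ k', if σ k' = k then t k' * z k ^ (j.1 + l.1) else 0 := by
        intro k
        simp only [hEdef, hFdef, Sum.elim_inr, hcdef]
        rw [Finset.sum_mul, Finset.mul_sum]
        apply Finset.sum_congr rfl
        intro k' _
        by_cases hkk : σ k' = k <;> simp [hkk, pow_add] <;> ring
      rw [Matrix.mul_apply]
      simp_rw [hLHS]
      rw [Finset.sum_comm]
      apply Finset.sum_congr rfl
      intro k _
      rw [Finset.sum_ite_eq Finset.univ (σ k)]
      simp only [Finset.mem_univ, if_true]
      rw [hσ k]
      simp only [_root_.map_mul, _root_.map_pow]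
      set w := (starRingEnd ℂ) (z k) with hw
      have hw0 : w ≠ 0 := by
        intro hc
        apply hz0 k
        rw [hw] at hc
        simpa using congrArg (starRingEnd ℂ) hc
      have hje := j.2
      have hle := l.2
      have hexp : (N - 1) = (N₁ - 1 - j.1 + (N₂ - 1 - l.1)) + (j.1 + l.1) := by omega
      show (starRingEnd ℂ) (s k) * w ^ (N₁ - 1 - j.1 + (N₂ - 1 - l.1))
          = (starRingEnd ℂ) (s k) * w ^ (N - 1) * w⁻¹ ^ (j.1 + l.1)
      rw [hexp]
      have h2 : w ^ (N₁ - 1 - j.1 + (N₂ - 1 - l.1) + (j.1 + l.1)) * w⁻¹ ^ (j.1 + l.1)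
          = w ^ (N₁ - 1 - j.1 + (N₂ - 1 - l.1)) := by
        rw [pow_add, inv_pow, mul_assoc, mul_inv_cancel₀ (pow_ne_zero _ hw0), mul_one]
      rw [mul_assoc, h2]
  rw [key]
  calc (E * F).rank ≤ E.rank := Matrix.rank_mul_le_left E F
    _ ≤ L := by simpa using E.rank_le_card_width
    _ ≤ K := hLK
end

section
/- Let N, N₁, N₂ be integers with N₁, N₂ ≥ 2 and N₁ + N₂ = N + 1, and let y ∈ ℂ^N. If rank(H(y)) ≤ 1, then at least one of the following holds: (i) there exist s ∈ ℂ and nonzero z ∈ ℂ such that y_j = s · z^{j−1} for all j = 1,…,N; (ii) y_j = 0 for all j ≥ 2 (only the first entry may be nonzero); (iii) y_j = 0 for all j ≤ N−1 (only the last entry may be nonzero). -/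
open Matrix

/-- A rank ≤ 1 matrix has all 2×2 minors vanishing. -/
lemma minor_of_rank_le_one {m n : ℕ} (M : Matrix (Fin m) (Fin n) ℂ)
    (hrank : M.rank ≤ 1) (j j' : Fin m) (l l' : Fin n) :
    M j l * M j' l' = M j l' * M j' l := by
  by_contra hne
  set c : Fin m → ℂ := fun i => M i l with hc
  set c' : Fin m → ℂ := fun i => M i l' with hc'
  have li : LinearIndependent ℂ ![c, c'] := by
    rw [LinearIndependent.pair_iff]
    intro a b hab
    have h1 : a * c j + b * c' j = 0 := by
      have := congrFun hab j; simpa using this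
    have h2 : a * c j' + b * c' j' = 0 := by
      have := congrFun hab j'; simpa using this
    constructor
    · by_contra ha
      have : a * (M j l * M j' l' - M j l' * M j' l)
          = (a * c j + b * c' j) * c' j' - (a * c j' + b * c' j') * c' j := by
        simp only [hc, hc']; ring
      rw [h1, h2] at this
      simp only [zero_mul, sub_zero, sub_self] at this
      have := mul_eq_zero.mp this
      rcases this with h | h
      · exact absurd h ha
      · exact hne (sub_eq_zero.mp h)
    · by_contra hb
      have : b * (M j l * M j' l' - M j l' * M j' l)
          = (a * c j' + b * c' j') * c j - (a * c j + b * c' j) * c j' := by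
        simp only [hc, hc']; ring
      rw [h1, h2] at this
      simp only [zero_mul, sub_zero, sub_self] at this
      have := mul_eq_zero.mp this
      rcases this with h | h
      · exact absurd h hb
      · exact hne (sub_eq_zero.mp h)
  have hsub : Set.range ![c, c'] ⊆ Set.range Mᵀ := by
    rintro v ⟨i, rfl⟩
    fin_cases i
    · exact ⟨l, rfl⟩
    · exact ⟨l', rfl⟩
  have h2 : (2 : ℕ) ≤ M.rank := by
    rw [Matrix.rank_eq_finrank_span_cols]
    calc (2 : ℕ) = Module.finrank ℂ (Submodule.span ℂ (Set.range ![c, c'])) := by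
          rw [finrank_span_eq_card li, Fintype.card_fin]
      _ ≤ _ := Submodule.finrank_mono (Submodule.span_mono hsub)
  omega

theorem statement8 (N N₁ N₂ : ℕ) (hN₁ : 2 ≤ N₁) (hN₂ : 2 ≤ N₂)
    (h : N₁ + N₂ = N + 1) (y : Fin N → ℂ)
    (hrank : (hankelM N₁ N₂ h y).rank ≤ 1) :
    (∃ s z : ℂ, z ≠ 0 ∧ ∀ j : Fin N, y j = s * z ^ (j : ℕ)) ∨
      (∀ j : Fin N, 1 ≤ (j : ℕ) → y j = 0) ∨
      (∀ j : Fin N, (j : ℕ) + 1 < N → y j = 0) := by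
  have hN : 3 ≤ N := by omega
  set Y : ℕ → ℂ := fun k => if hk : k < N then y ⟨k, hk⟩ else 0 with hY
  have hYeq : ∀ (k : ℕ) (hk : k < N), Y k = y ⟨k, hk⟩ := by
    intro k hk; simp [hY, hk]
  have minorY : ∀ j j' l l' : ℕ, j < N₁ → j' < N₁ → l < N₂ → l' < N₂ →
      Y (j + l) * Y (j' + l') = Y (j + l') * Y (j' + l) := by
    intro j j' l l' hj hj' hl hl'
    have := minor_of_rank_le_one _ hrank ⟨j, hj⟩ ⟨j', hj'⟩ ⟨l, hl⟩ ⟨l', hl'⟩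
    simp only [hankelM] at this
    rw [hYeq (j+l) (by omega), hYeq (j'+l') (by omega), hYeq (j+l') (by omega),
      hYeq (j'+l) (by omega)]
    exact this
  have key : ∀ k : ℕ, k + 2 < N → Y k * Y (k + 2) = Y (k + 1) * Y (k + 1) := by
    intro k hk
    set j := min k (N₁ - 2) with hj
    set l := k - j with hl
    have h1 : j + l = k := by omega
    have h2 : j + 1 < N₁ := by omega
    have h3 : l + 1 < N₂ := by omega
    have := minorY j (j + 1) l (l + 1) (by omega) h2 (by omega) h3
    have e1 : j + (l + 1) = k + 1 := by omega
    have e2 : j + 1 + l = k + 1 := by omega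
    have e3 : j + 1 + (l + 1) = k + 2 := by omega
    rw [h1, e1, e2, e3] at this
    exact this
  by_cases hmid : ∃ k : ℕ, 1 ≤ k ∧ k + 1 < N ∧ Y k ≠ 0
  · -- geometric case
    obtain ⟨k, hk1, hk2, hk3⟩ := hmid
    have down : ∀ d : ℕ, d ≤ k → Y (k - d) ≠ 0 := by
      intro d
      induction d with
      | zero => intro _; simpa using hk3
      | succ n ih =>
        intro hd
        have h1 : Y (k - n) ≠ 0 := ih (by omega)
        have hkey := key (k - (n + 1)) (by omega)
        have e1 : k - (n + 1) + 1 = k - n := by omega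
        have e2 : k - (n + 1) + 2 = k - n + 1 := by omega
        rw [e1, e2] at hkey
        intro h0
        rw [h0, zero_mul] at hkey
        exact h1 (by
          have := mul_self_eq_zero.mp hkey.symm
          exact this)
    have up : ∀ d : ℕ, k + d < N → Y (k + d) ≠ 0 := by
      intro d
      induction d with
      | zero => intro _; simpa using hk3
      | succ n ih =>
        intro hd
        have h1 : Y (k + n) ≠ 0 := ih (by omega)
        have hkey := key (k + n - 1) (by omega)
        have e1 : k + n - 1 + 1 = k + n := by omega
        have e2 : k + n - 1 + 2 = k + (n + 1) := by omega
        rw [e1, e2] at hkey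
        intro h0
        rw [h0, mul_zero] at hkey
        exact h1 (mul_self_eq_zero.mp hkey.symm)
    have nonzero : ∀ m : ℕ, m < N → Y m ≠ 0 := by
      intro m hm
      rcases le_or_gt m k with hmk | hmk
      · have := down (k - m) (by omega)
        rwa [show k - (k - m) = m by omega] at this
      · have := up (m - k) (by omega)
        rwa [show k + (m - k) = m by omega] at this
    have hY0 : Y 0 ≠ 0 := nonzero 0 (by omega)
    have hY1 : Y 1 ≠ 0 := nonzero 1 (by omega)
    set z : ℂ := Y 1 / Y 0 with hz
    have hzne : z ≠ 0 := div_ne_zero hY1 hY0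
    have step : ∀ m : ℕ, m + 1 < N → Y (m + 1) = Y m * z := by
      intro m
      induction m with
      | zero => intro _; rw [hz]; field_simp
      | succ n ih =>
        intro hm
        have h1 : Y (n + 1) = Y n * z := ih (by omega)
        have hkey := key n (by omega)
        have hn : Y n ≠ 0 := nonzero n (by omega)
        have : Y n * Y (n + 2) = Y n * (Y (n + 1) * z) := by
          rw [hkey, h1]; ring
        exact mul_left_cancel₀ hn this
    have geom : ∀ m : ℕ, m < N → Y m = Y 0 * z ^ m := by
      intro m
      induction m with
      | zero => intro _; simp
      | succ n ih =>
        intro hm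
        rw [step n hm, ih (by omega), pow_succ]; ring
    left
    exact ⟨Y 0, z, hzne, fun j => by
      rw [← hYeq j j.2, geom j j.2]⟩
  · push_neg at hmid
    have corner : Y 0 * Y (N - 1) = 0 := by
      have := minorY 0 (N₁ - 1) 0 (N₂ - 1) (by omega) (by omega) (by omega) (by omega)
      simp only [Nat.zero_add, Nat.add_zero] at this
      rw [show N₁ - 1 + (N₂ - 1) = N - 1 by omega] at this
      rw [this, hmid (N₂ - 1) (by omega) (by omega), zero_mul]
    rcases mul_eq_zero.mp corner with h0 | h0
    · right; right
      intro j hj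
      rw [← hYeq j j.2]
      rcases Nat.eq_zero_or_pos (j : ℕ) with hj0 | hj0
      · rw [hj0]; exact h0
      · exact hmid j hj0 (by omega)
    · right; left
      intro j hj
      rw [← hYeq j j.2]
      rcases Nat.lt_or_ge ((j : ℕ) + 1) N with hjN | hjN
      · exact hmid j hj hjN
      · rw [show (j : ℕ) = N - 1 by have := j.2; omega]; exact h0
end

section
/- (Proposition 1, K = 1 case.) Let N, N₁, N₂ be integers with N₁, N₂ ≥ 2 and N₁ + N₂ = N + 1, and let y ∈ ℂ^N. Then rank([H(y) | J_{N₁}·conj(H(y))·J_{N₂}]) ≤ 1 if and only if there exist s ∈ ℂ and z ∈ ℂ with |z| = 1 such that y_j = s · z^{j−1} for all j = 1,…,N. That is, with K = 1 the low-rank double Hankel constraint exactly characterizes undamped single-sinusoid signals. -/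
open Matrix

lemma rank_le_one_exists {m n : Type*} [Fintype m] [Fintype n] [DecidableEq n]
    (A : Matrix m n ℂ) (hA : A.rank ≤ 1) :
    ∃ (u : m → ℂ) (w : n → ℂ), ∀ i j, A i j = w j * u i := by
  rw [Matrix.rank, Submodule.finrank_le_one_iff_isPrincipal] at hA
  obtain ⟨v, hv⟩ := hA
  have hcol : ∀ j : n, ∃ c : ℂ, (fun i => A i j) = c • v := by
    intro j
    have hmem : (fun i => A i j) ∈ LinearMap.range A.mulVecLin := by
      refine ⟨Pi.single j 1, ?_⟩
      simp [Matrix.mulVecLin_apply]; rfl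
    rw [hv, Submodule.mem_span_singleton] at hmem
    obtain ⟨c, hc⟩ := hmem
    exact ⟨c, hc.symm⟩
  choose w hw using hcol
  exact ⟨v, w, fun i j => by
    have := congrFun (hw j) i; simpa [smul_eq_mul] using this⟩

lemma factor_rank_le_one {m n : Type*} [Fintype m] [Fintype n]
    (A : Matrix m n ℂ) (u : m → ℂ) (w : n → ℂ) (hA : ∀ i j, A i j = w j * u i) :
    A.rank ≤ 1 := by
  have hfac : A = (Matrix.of fun i (_ : Fin 1) => u i) * (Matrix.of fun (_ : Fin 1) j => w j) := by
    ext i j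
    simp [Matrix.mul_apply, hA i j, mul_comm]
  calc A.rank ≤ ((Matrix.of fun (_ : Fin 1) j => w j) : Matrix (Fin 1) n ℂ).rank := by
        rw [hfac]; exact Matrix.rank_mul_le_right _ _
    _ ≤ 1 := by simpa using Matrix.rank_le_card_height (Matrix.of fun (_ : Fin 1) j => w j)

lemma revM_mul {m n : ℕ} (X : Matrix (Fin m) (Fin n) ℂ) (i : Fin m) (j : Fin n) :
    (revM m * X) i j = X ⟨m - 1 - i.1, by have := i.2; omega⟩ j := by
  rw [Matrix.mul_apply]
  rw [Finset.sum_eq_single (⟨m - 1 - i.1, by have := i.2; omega⟩ : Fin m)]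
  · rw [revM]; have := i.2; rw [if_pos (by simp; omega)]; ring
  · intro b _ hb
    rw [revM]; have := i.2; have hb2 := b.2
    rw [if_neg ?_]; · ring
    intro hcon
    exact hb (Fin.ext (by simp at hcon ⊢; omega))
  · intro hcon; exact absurd (Finset.mem_univ _) hcon

lemma mul_revM {m n : ℕ} (X : Matrix (Fin m) (Fin n) ℂ) (i : Fin m) (j : Fin n) :
    (X * revM n) i j = X i ⟨n - 1 - j.1, by have := j.2; omega⟩ := by
  rw [Matrix.mul_apply]
  rw [Finset.sum_eq_single (⟨n - 1 - j.1, by have := j.2; omega⟩ : Fin n)]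
  · rw [revM]; have := j.2; rw [if_pos (by simp; omega)]; ring
  · intro b _ hb
    rw [revM]; have := j.2; have hb2 := b.2
    rw [if_neg ?_]; · ring
    intro hcon
    exact hb (Fin.ext (by simp at hcon ⊢; omega))
  · intro hcon; exact absurd (Finset.mem_univ _) hcon

lemma dHankel_inl {N : ℕ} (N₁ N₂ : ℕ) (h : N₁ + N₂ = N + 1) (y : Fin N → ℂ)
    (i : Fin N₁) (l : Fin N₂) :
    dHankel N₁ N₂ h y i (Sum.inl l) = y ⟨i.1 + l.1, by have := i.2; have := l.2; omega⟩ := by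
  rw [dHankel, Matrix.fromCols_apply_inl]; rfl

lemma dHankel_inr {N : ℕ} (N₁ N₂ : ℕ) (h : N₁ + N₂ = N + 1) (y : Fin N → ℂ)
    (i : Fin N₁) (l : Fin N₂) :
    dHankel N₁ N₂ h y i (Sum.inr l) =
      (starRingEnd ℂ) (y ⟨N - 1 - i.1 - l.1, by have := i.2; have := l.2; omega⟩) := by
  rw [dHankel, Matrix.fromCols_apply_inr, mul_revM, revM_mul, Matrix.map_apply]
  congr 1
  rw [hankelM]
  congr 1
  exact Fin.ext (by simp; have := i.2; have := l.2; omega)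


lemma key_lemma (N₁ N₂ : ℕ) (h1 : 2 ≤ N₁) (h2 : 2 ≤ N₂) (Y u a b : ℕ → ℂ)
    (hY : ∀ j l, j < N₁ → l < N₂ → Y (j + l) = a l * u j)
    (hB : ∀ j l, j < N₁ → l < N₂ → (starRingEnd ℂ) (Y (N₁ + N₂ - 2 - j - l)) = b l * u j)
    (hne : ∃ n, n ≤ N₁ + N₂ - 2 ∧ Y n ≠ 0) :
    ∃ s z : ℂ, ‖z‖ = 1 ∧ ∀ n, n ≤ N₁ + N₂ - 2 → Y n = s * z ^ n := by
  classical
  obtain ⟨n, hn, hYn⟩ := hne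
  obtain ⟨j₀, l₀, hj₀, hl₀, hjl₀⟩ :
      ∃ j l, j < N₁ ∧ l < N₂ ∧ j + l = n :=
    ⟨min n (N₁ - 1), n - min n (N₁ - 1), by omega, by omega, by omega⟩
  have hu0a0 : u j₀ ≠ 0 ∧ a l₀ ≠ 0 := by
    have hh := hY j₀ l₀ hj₀ hl₀
    rw [hjl₀] at hh
    constructor <;> intro hz <;> apply hYn <;> rw [hh, hz] <;> ring
  -- minimal support point of u
  have hPu : ∃ j, u j ≠ 0 ∧ j < N₁ := ⟨j₀, hu0a0.1, hj₀⟩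
  have hPa : ∃ l, a l ≠ 0 ∧ l < N₂ := ⟨l₀, hu0a0.2, hl₀⟩
  have hQu : ∃ j, u (N₁ - 1 - j) ≠ 0 :=
    ⟨N₁ - 1 - j₀, by rw [show N₁ - 1 - (N₁ - 1 - j₀) = j₀ by omega]; exact hu0a0.1⟩
  have hQa : ∃ l, a (N₂ - 1 - l) ≠ 0 :=
    ⟨N₂ - 1 - l₀, by rw [show N₂ - 1 - (N₂ - 1 - l₀) = l₀ by omega]; exact hu0a0.2⟩
  set p := Nat.find hPu with hp_def
  set m := Nat.find hPa with hm_def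
  set q := N₁ - 1 - Nat.find hQu with hq_def
  set M := N₂ - 1 - Nat.find hQa with hM_def
  have hup : u p ≠ 0 := (Nat.find_spec hPu).1
  have hpN : p < N₁ := (Nat.find_spec hPu).2
  have ham : a m ≠ 0 := (Nat.find_spec hPa).1
  have hmN : m < N₂ := (Nat.find_spec hPa).2
  have hplow : ∀ k, k < p → u k = 0 := by
    intro k hk
    by_contra hc
    exact Nat.find_min hPu hk ⟨hc, by omega⟩
  have hmlow : ∀ k, k < m → a k = 0 := by
    intro k hk
    by_contra hc
    exact Nat.find_min hPa hk ⟨hc, by omega⟩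
  have hfindu : Nat.find hQu ≤ N₁ - 1 - j₀ := Nat.find_min' hQu (by
    rw [show N₁ - 1 - (N₁ - 1 - j₀) = j₀ by omega]; exact hu0a0.1)
  have hfinda : Nat.find hQa ≤ N₂ - 1 - l₀ := Nat.find_min' hQa (by
    rw [show N₂ - 1 - (N₂ - 1 - l₀) = l₀ by omega]; exact hu0a0.2)
  have huq : u q ≠ 0 := Nat.find_spec hQu
  have haM : a M ≠ 0 := Nat.find_spec hQa
  have hqN : q < N₁ := by omega
  have hMN : M < N₂ := by omega
  have hqhigh : ∀ k, q < k → k < N₁ → u k = 0 := by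
    intro k hk hkN
    by_contra hc
    have : N₁ - 1 - k < Nat.find hQu := by omega
    exact Nat.find_min hQu this (by
      rwa [show N₁ - 1 - (N₁ - 1 - k) = k by omega])
  have hMhigh : ∀ k, M < k → k < N₂ → a k = 0 := by
    intro k hk hkN
    by_contra hc
    have : N₂ - 1 - k < Nat.find hQa := by omega
    exact Nat.find_min hQa this (by
      rwa [show N₂ - 1 - (N₂ - 1 - k) = k by omega])
  have hpq : p ≤ q := Nat.find_min' hPu ⟨huq, hqN⟩
  have hmM : m ≤ M := Nat.find_min' hPa ⟨haM, hMN⟩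
  -- step 1 : p = 0 and m = 0
  have hpm1 : 1 ≤ p → m = N₂ - 1 := by
    intro hp
    by_contra hm
    have e1 := hY p m hpN hmN
    have e2 := hY (p - 1) (m + 1) (by omega) (by omega)
    rw [show p - 1 + (m + 1) = p + m by omega] at e2
    rw [hplow (p - 1) (by omega)] at e2
    rw [e1, mul_zero] at e2
    exact hup (by
      rcases mul_eq_zero.mp e2 with h' | h'
      · exact absurd h' ham
      · exact h')
  have hmp1 : 1 ≤ m → p = N₁ - 1 := by
    intro hm
    by_contra hp
    have e1 := hY p m hpN hmN
    have e2 := hY (p + 1) (m - 1) (by omega) (by omega)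
    rw [show p + 1 + (m - 1) = p + m by omega] at e2
    rw [hmlow (m - 1) (by omega)] at e2
    rw [e1, zero_mul] at e2
    exact hup (by
      rcases mul_eq_zero.mp e2 with h' | h'
      · exact absurd h' ham
      · exact h')
  have hp0 : p = 0 ∧ m = 0 := by
    by_contra hc
    have hpe : p = N₁ - 1 ∧ m = N₂ - 1 := by
      rcases Nat.eq_zero_or_pos p with hp | hp
      · rcases Nat.eq_zero_or_pos m with hm | hm
        · exact absurd ⟨hp, hm⟩ hc
        · have := hmp1 hm; omega
      · have hm := hpm1 hp
        have := hmp1 (by omega)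
        omega
    -- Y (N₁ + N₂ - 2) ≠ 0 but conj of it is b 0 * u 0 = 0
    have e1 := hY p m hpN hmN
    have hYN : Y (N₁ + N₂ - 2) ≠ 0 := by
      rw [show N₁ + N₂ - 2 = p + m by omega, e1]
      exact mul_ne_zero ham hup
    have e2 := hB 0 0 (by omega) (by omega)
    rw [hplow 0 (by omega), mul_zero] at e2
    apply hYN
    have : Y (N₁ + N₂ - 2 - 0 - 0) = 0 := by
      have := congrArg (starRingEnd ℂ) e2
      simpa using this
    simpa using this
  -- step 2 : q = N₁ - 1
  have hq1 : q = N₁ - 1 := by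
    by_contra hq
    have hM0 : M = 0 := by
      by_contra hM
      have e1 := hY q M hqN hMN
      have e2 := hY (q + 1) (M - 1) (by omega) (by omega)
      rw [show q + 1 + (M - 1) = q + M by omega] at e2
      rw [hqhigh (q + 1) (by omega) (by omega), mul_zero] at e2
      rw [e1] at e2
      exact huq (by
        rcases mul_eq_zero.mp e2 with h' | h'
        · exact absurd h' haM
        · exact h')
    have hq0 : q = 0 := by
      by_contra hq1
      have e1 := hY q M hqN hMN
      have e2 := hY (q - 1) (M + 1) (by omega) (by omega)
      rw [show q - 1 + (M + 1) = q + M by omega] at e2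
      rw [hMhigh (M + 1) (by omega) (by omega), zero_mul] at e2
      rw [e1] at e2
      exact huq (by
        rcases mul_eq_zero.mp e2 with h' | h'
        · exact absurd h' haM
        · exact h')
    -- now q = 0, M = 0, so Y 0 ≠ 0 but conj Y 0 = b (N₂-1) * u (N₁-1) = 0
    have e1 := hY q M hqN hMN
    have hY0 : Y 0 ≠ 0 := by
      rw [show (0 : ℕ) = q + M by omega, e1]
      exact mul_ne_zero haM huq
    have e2 := hB (N₁ - 1) (N₂ - 1) (by omega) (by omega)
    rw [show N₁ + N₂ - 2 - (N₁ - 1) - (N₂ - 1) = 0 by omega] at e2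
    rw [hqhigh (N₁ - 1) (by omega) (by omega), mul_zero] at e2
    apply hY0
    have := congrArg (starRingEnd ℂ) e2
    simpa using this
  have hu0 : u 0 ≠ 0 := by rw [← hp0.1]; exact hup
  have ha0 : a 0 ≠ 0 := by rw [← hp0.2]; exact ham
  have huN : u (N₁ - 1) ≠ 0 := by rw [← hq1]; exact huq
  -- geometric structure
  set r : ℂ := a 1 / a 0 with hr_def
  have hr : a 1 = r * a 0 := by rw [hr_def, div_mul_cancel₀ _ ha0]
  have hugeom : ∀ j, j < N₁ → u j = r ^ j * u 0 := by
    intro j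
    induction j with
    | zero => intro _; simp
    | succ k ih =>
      intro hk
      have e1 := hY (k + 1) 0 hk (by omega)
      have e2 := hY k 1 (by omega) (by omega)
      rw [add_zero] at e1
      have huk := ih (by omega)
      apply mul_left_cancel₀ ha0
      calc a 0 * u (k + 1) = a 1 * u k := by rw [← e1, e2]
        _ = a 0 * (r ^ (k + 1) * u 0) := by rw [huk, hr]; ring
  have hr0 : r ≠ 0 := by
    intro hrz
    apply huN
    rw [hugeom (N₁ - 1) (by omega), hrz, zero_pow (by omega), zero_mul]
  have hu1 : u 1 = r * u 0 := by
    have := hugeom 1 (by omega); rwa [pow_one] at this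
  have hageom : ∀ l, l < N₂ → a l = r ^ l * a 0 := by
    intro l
    induction l with
    | zero => intro _; simp
    | succ k ih =>
      intro hk
      have e1 := hY 0 (k + 1) (by omega) hk
      have e2 := hY 1 k (by omega) (by omega)
      rw [zero_add] at e1
      rw [show 1 + k = k + 1 by omega] at e2
      have hak := ih (by omega)
      apply mul_right_cancel₀ hu0
      calc a (k + 1) * u 0 = a k * u 1 := by rw [← e1, e2]
        _ = r ^ (k + 1) * a 0 * u 0 := by rw [hak, hu1]; ring
  set s : ℂ := a 0 * u 0 with hs_def
  have hs0 : s ≠ 0 := mul_ne_zero ha0 hu0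
  have hYall : ∀ n', n' ≤ N₁ + N₂ - 2 → Y n' = s * r ^ n' := by
    intro n' hn'
    obtain ⟨j, l, hj, hl, hjl⟩ :
        ∃ j l, j < N₁ ∧ l < N₂ ∧ j + l = n' :=
      ⟨min n' (N₁ - 1), n' - min n' (N₁ - 1), by omega, by omega, by omega⟩
    rw [← hjl, hY j l hj hl, hageom l hl, hugeom j hj, hs_def, pow_add]
    ring
  -- modulus of r is 1
  have hb0 : b 0 * u 0 ≠ 0 := by
    rw [← hB 0 0 (by omega) (by omega)]
    simp only [Nat.sub_zero]
    rw [hYall (N₁ + N₂ - 2) (le_refl _)]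
    simp [hs0, hr0]
  have e1 := hB 0 0 (by omega) (by omega)
  have e2 := hB 1 0 (by omega) (by omega)
  rw [show N₁ + N₂ - 2 - 0 - 0 = N₁ + N₂ - 2 by omega] at e1
  rw [show N₁ + N₂ - 2 - 1 - 0 = N₁ + N₂ - 3 by omega] at e2
  rw [hYall (N₁ + N₂ - 2) (le_refl _)] at e1
  rw [hYall (N₁ + N₂ - 3) (by omega)] at e2
  rw [hu1] at e2
  have key : r * (starRingEnd ℂ) r = 1 := by
    have e3 : (starRingEnd ℂ) (s * r ^ (N₁ + N₂ - 3)) =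
        r * (starRingEnd ℂ) (s * r ^ (N₁ + N₂ - 2)) := by
      rw [e1, e2]; ring
    simp only [_root_.map_mul, _root_.map_pow] at e3
    rw [show N₁ + N₂ - 2 = (N₁ + N₂ - 3) + 1 by omega, pow_succ] at e3
    have hcs : (starRingEnd ℂ) s ≠ 0 := by simpa using hs0
    have hcr : ((starRingEnd ℂ) r) ^ (N₁ + N₂ - 3) ≠ 0 :=
      pow_ne_zero _ (by simpa using hr0)
    have e4 : (starRingEnd ℂ) s * ((starRingEnd ℂ) r) ^ (N₁ + N₂ - 3) * (r * (starRingEnd ℂ) r)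
        = (starRingEnd ℂ) s * ((starRingEnd ℂ) r) ^ (N₁ + N₂ - 3) * 1 := by
      linear_combination -e3
    exact mul_left_cancel₀ (mul_ne_zero hcs hcr) e4
  have habs : ‖r‖ = 1 := by
    have h1 : ((Complex.normSq r : ℝ) : ℂ) = 1 := by
      rw [← Complex.mul_conj]; exact key
    have h2 : Complex.normSq r = 1 := by exact_mod_cast h1
    have h3 : ‖r‖ ^ 2 = 1 := by rw [Complex.sq_norm]; exact h2
    nlinarith [norm_nonneg r]
  exact ⟨s, r, habs, hYall⟩


theorem statement9 (N N₁ N₂ : ℕ) (hN₁ : 2 ≤ N₁) (hN₂ : 2 ≤ N₂)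
    (h : N₁ + N₂ = N + 1) (y : Fin N → ℂ) :
    (dHankel N₁ N₂ h y).rank ≤ 1 ↔
      ∃ s z : ℂ, ‖z‖ = 1 ∧ ∀ j : Fin N, y j = s * z ^ (j : ℕ) := by
  constructor
  · intro hrank
    by_cases hy0 : ∀ j : Fin N, y j = 0
    · exact ⟨0, 1, by simp, fun j => by rw [hy0 j]; simp⟩
    · push_neg at hy0
      obtain ⟨j₁, hj₁⟩ := hy0
      obtain ⟨v, w, hfac⟩ := rank_le_one_exists _ hrank
      set Y : ℕ → ℂ := fun n => if hn : n < N then y ⟨n, hn⟩ else 0 with hY_def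
      set u : ℕ → ℂ := fun j => if hj : j < N₁ then v ⟨j, hj⟩ else 0 with hu_def
      set a : ℕ → ℂ := fun l => if hl : l < N₂ then w (Sum.inl ⟨l, hl⟩) else 0 with ha_def
      set b : ℕ → ℂ := fun l => if hl : l < N₂ then w (Sum.inr ⟨l, hl⟩) else 0 with hb_def
      have hYfac : ∀ j l, j < N₁ → l < N₂ → Y (j + l) = a l * u j := by
        intro j l hj hl
        have hf := hfac ⟨j, hj⟩ (Sum.inl ⟨l, hl⟩)
        rw [dHankel_inl] at hf
        simp only [hY_def, hu_def, ha_def]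
        rw [dif_pos (show j + l < N by omega), dif_pos hj, dif_pos hl]
        exact hf
      have hBfac : ∀ j l, j < N₁ → l < N₂ →
          (starRingEnd ℂ) (Y (N₁ + N₂ - 2 - j - l)) = b l * u j := by
        intro j l hj hl
        have hf := hfac ⟨j, hj⟩ (Sum.inr ⟨l, hl⟩)
        rw [dHankel_inr] at hf
        simp only [hY_def, hu_def, hb_def]
        rw [show N₁ + N₂ - 2 - j - l = N - 1 - j - l by omega]
        rw [dif_pos (show N - 1 - j - l < N by omega), dif_pos hj, dif_pos hl]
        exact hf
      have hne : ∃ n, n ≤ N₁ + N₂ - 2 ∧ Y n ≠ 0 := by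
        refine ⟨j₁.1, by have := j₁.2; omega, ?_⟩
        simp only [hY_def]
        rw [dif_pos j₁.2]
        simpa using hj₁
      obtain ⟨s, z, hz, hall⟩ := key_lemma N₁ N₂ hN₁ hN₂ Y u a b hYfac hBfac hne
      refine ⟨s, z, hz, fun j => ?_⟩
      have hj := hall j.1 (by have := j.2; omega)
      simp only [hY_def] at hj
      rw [dif_pos j.2] at hj
      simpa using hj
  · rintro ⟨s, z, hz, hy⟩
    have hz0 : z ≠ 0 := by
      intro hzz; rw [hzz] at hz; simp at hz
    have hzc : z * (starRingEnd ℂ) z = 1 := by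
      rw [Complex.mul_conj]
      norm_cast
      rw [← Complex.sq_norm, hz]; norm_num
    apply factor_rank_le_one _ (fun i : Fin N₁ => z ^ i.1)
      (Sum.elim (fun l : Fin N₂ => s * z ^ l.1)
        (fun l : Fin N₂ => (starRingEnd ℂ) s * ((starRingEnd ℂ) z) ^ (N - 1 - l.1)))
    rintro i (l | l)
    · rw [dHankel_inl, hy]
      simp only [Sum.elim_inl]
      rw [pow_add]
      ring
    · rw [dHankel_inr, hy]
      simp only [Sum.elim_inr]
      rw [_root_.map_mul, _root_.map_pow]
      have hsplit : N - 1 - l.1 = (N - 1 - i.1 - l.1) + i.1 := by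
        have := i.2; have := l.2; omega
      rw [hsplit, pow_add]
      have hone : ((starRingEnd ℂ) z) ^ i.1 * z ^ i.1 = 1 := by
        rw [← mul_pow, mul_comm ((starRingEnd ℂ) z) z, hzc, one_pow]
      linear_combination (-((starRingEnd ℂ) s *
        ((starRingEnd ℂ) z) ^ (N - 1 - i.1 - l.1))) * hone
end

section
/- (Theorem 1, probabilistic part.) Let N, N₁, N₂, K be positive integers with N₁ + N₂ = N + 1 and N₂ < K ≤ min(N₁ − 1, 2N₂). Let z₁,…,z_K ∈ ℂ be pairwise distinct with |z_k| = 1 and let r₁,…,r_K > 0 be fixed. Let (u₁,…,u_K) be a random element of the K-dimensional torus (the unit circle in ℂ)^K whose distribution is absolutely continuous with respect to Haar measure, set s_k = r_k · u_k, and let y ∈ ℂ^N with y_j = Σ_{k=1}^K s_k · z_k^{j−1}. Then with probability one the double Hankel matrix D(y) = [H(y) | J_{N₁}·conj(H(y))·J_{N₂}] has rank exactly K and its column space equals the column space of A_{N₁}(z). -/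
open Matrix MeasureTheory

section Aux
open MeasureTheory

lemma addCircle_noAtoms : NoAtoms (volume : Measure (AddCircle (1:ℝ))) := by
  constructor
  intro x
  obtain ⟨x₀, rfl⟩ : ∃ y : ℝ, (y : AddCircle (1:ℝ)) = x := Quotient.exists_rep x
  have hmp := AddCircle.measurePreserving_mk 1 (0:ℝ)
  have hpre : volume ((fun y : ℝ => (y : AddCircle (1:ℝ))) ⁻¹' {((x₀ : AddCircle (1:ℝ)))}) = 0 := by
    apply measure_mono_null (t := Set.range (fun n : ℤ => x₀ + n * 1))
    · intro y hy
      simp only [Set.mem_preimage, Set.mem_singleton_iff] at hy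
      have h0 : ((y - x₀ : ℝ) : AddCircle (1:ℝ)) = 0 := by
        rw [QuotientAddGroup.mk_sub, hy, sub_self]
      obtain ⟨n, hn⟩ := (AddCircle.coe_eq_zero_iff (1:ℝ)).mp h0
      exact ⟨n, by simp only [zsmul_eq_mul, mul_one] at hn ⊢; linarith [hn]⟩
    · exact Set.Countable.measure_zero (Set.countable_range _) _
  have heq := hmp.measure_preimage (s := {((x₀:ℝ) : AddCircle (1:ℝ))})
    (measurableSet_singleton _).nullMeasurableSet
  rw [← heq]
  exact le_antisymm (le_trans (Measure.restrict_le_self _) (le_of_eq hpre)) zero_le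

lemma meas_tc : Measurable (fun x : AddCircle (1:ℝ) => ((AddCircle.toCircle x : Circle) : ℂ)) :=
  (continuous_subtype_val.comp AddCircle.continuous_toCircle).measurable

lemma inj_tc : Function.Injective (fun x : AddCircle (1:ℝ) => ((AddCircle.toCircle x : Circle) : ℂ)) :=
  Subtype.coe_injective.comp (AddCircle.injective_toCircle one_ne_zero)

lemma measurable_evalP {n : ℕ} (P : MvPolynomial (Fin n) ℂ) :
    Measurable fun u : Fin n → AddCircle (1:ℝ) =>
      MvPolynomial.eval (fun k => ((AddCircle.toCircle (u k) : Circle) : ℂ)) P := by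
  have hg : ∀ k, Measurable fun u : Fin n → AddCircle (1:ℝ) =>
      ((AddCircle.toCircle (u k) : Circle) : ℂ) :=
    fun k => meas_tc.comp (measurable_pi_apply k)
  simp only [MvPolynomial.eval_eq]
  refine Finset.measurable_sum _ fun m _ => Measurable.mul measurable_const ?_
  exact Finset.measurable_prod _ fun i _ => (hg i).pow_const _

lemma torus_null : ∀ (n : ℕ) (P : MvPolynomial (Fin n) ℂ), P ≠ 0 →
    (volume : Measure (Fin n → AddCircle (1:ℝ)))
      {w | MvPolynomial.eval (fun k => ((AddCircle.toCircle (w k) : Circle) : ℂ)) P = 0} = 0 := by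
  intro n
  induction n with
  | zero =>
    intro P hP
    obtain ⟨c, rfl⟩ := MvPolynomial.C_surjective (Fin 0) P
    have hc : c ≠ 0 := fun hc => hP (by rw [hc, map_zero])
    convert measure_empty
    · ext w; simp [hc]
    · infer_instance
  | succ n ih =>
    intro P hP
    haveI : NullSingletonClass (volume : Measure (AddCircle (1:ℝ))) := addCircle_noAtoms
    set Q := MvPolynomial.finSuccEquiv ℂ n P with hQdef
    have hQ0 : Q ≠ 0 := fun h0 =>
      hP ((MvPolynomial.finSuccEquiv ℂ n).injective (by rw [← hQdef, h0, map_zero]))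
    obtain ⟨i, hi⟩ : ∃ i, Q.coeff i ≠ 0 := by
      by_contra hcon; push_neg at hcon
      exact hQ0 (Polynomial.ext fun j => by simp [hcon j])
    set S : Set (Fin (n+1) → AddCircle (1:ℝ)) :=
      {w | MvPolynomial.eval (fun k => ((AddCircle.toCircle (w k) : Circle) : ℂ)) P = 0} with hSdef
    have hSm : MeasurableSet S := measurable_evalP P (measurableSet_singleton 0)
    set e := MeasurableEquiv.piFinSuccAbove (fun _ : Fin (n+1) => AddCircle (1:ℝ)) 0 with hedef
    have hmp := MeasureTheory.volume_preserving_piFinSuccAbove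
      (fun _ : Fin (n+1) => AddCircle (1:ℝ)) 0
    set A : Set (AddCircle (1:ℝ) × (Fin n → AddCircle (1:ℝ))) := e.symm ⁻¹' S with hAdef
    have hAm : MeasurableSet A := e.symm.measurable hSm
    have hSA : S = e ⁻¹' A := by
      ext w
      simp only [hAdef, Set.mem_preimage, MeasurableEquiv.symm_apply_apply]
    have hvol : (volume : Measure (Fin (n+1) → AddCircle (1:ℝ))) S
        = ((volume : Measure (AddCircle (1:ℝ))).prod
            (volume : Measure (Fin n → AddCircle (1:ℝ)))) A := by
      rw [hSA]
      have := hmp.measure_preimage hAm.nullMeasurableSet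
      exact this
    rw [hvol]
    -- swap the factors
    have hswap : ((volume : Measure (AddCircle (1:ℝ))).prod
            (volume : Measure (Fin n → AddCircle (1:ℝ)))) A
        = ((volume : Measure (Fin n → AddCircle (1:ℝ))).prod
            (volume : Measure (AddCircle (1:ℝ)))) (Prod.swap ⁻¹' A) := by
      rw [← MeasureTheory.Measure.prod_swap, Measure.map_apply measurable_swap hAm]
    rw [hswap, Measure.measure_prod_null (measurable_swap hAm)]
    -- a.e. tail, the section is null
    have hnull := ih (Q.coeff i) hi
    filter_upwards [measure_eq_zero_iff_ae_notMem.mp hnull] with s hs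
    -- q : the one-variable polynomial obtained by evaluating coefficients at the tail
    set ws : Fin n → ℂ := fun k => ((AddCircle.toCircle (s k) : Circle) : ℂ) with hws
    set q : Polynomial ℂ := Q.map (MvPolynomial.eval ws) with hqdef
    have hq0 : q ≠ 0 := by
      intro h0
      apply hs
      have : q.coeff i = 0 := by rw [h0, Polynomial.coeff_zero]
      rw [hqdef, Polynomial.coeff_map] at this
      exact this
    have hsec : (Prod.mk s ⁻¹' (Prod.swap ⁻¹' A))
        = (fun y : AddCircle (1:ℝ) => ((AddCircle.toCircle y : Circle) : ℂ)) ⁻¹'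
            {x | q.IsRoot x} := by
      ext y
      simp only [Set.mem_preimage, Prod.swap_prod_mk, hAdef, Set.mem_setOf_eq, hSdef]
      have he : e.symm (y, s) = Fin.insertNth 0 y s := rfl
      rw [he, Fin.insertNth_zero']
      have hc : (fun k => ((AddCircle.toCircle ((Fin.cons y s : Fin (n+1) → AddCircle (1:ℝ)) k)
          : Circle) : ℂ))
          = Fin.cons ((AddCircle.toCircle y : Circle) : ℂ) ws := by
        have := Fin.comp_cons (fun x : AddCircle (1:ℝ) => ((AddCircle.toCircle x : Circle) : ℂ)) y s
        exact this
      rw [hc, MvPolynomial.eval_eq_eval_mv_eval']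
      rfl
    rw [hsec]
    exact Set.Finite.measure_zero
      ((Polynomial.finite_setOf_isRoot hq0).preimage inj_tc.injOn) _

end Aux



noncomputable def bMat (N N₂ : ℕ) {K : ℕ} (z w : Fin K → ℂ) (r : Fin K → ℝ) :
    Matrix (Fin K) (Fin N₂ ⊕ Fin N₂) ℂ :=
  fun k c => Sum.elim
    (fun l : Fin N₂ => ((r k : ℂ) * w k) * z k ^ (l : ℕ))
    (fun l : Fin N₂ =>
      ((starRingEnd ℂ) ((r k : ℂ) * w k) * (starRingEnd ℂ) (z k) ^ (N - 1)) * z k ^ (l : ℕ)) c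

noncomputable def polyQ (N N₂ : ℕ) {K : ℕ} (z : Fin K → ℂ) :
    Matrix (Fin K) (Fin K) (MvPolynomial (Fin K) ℂ) :=
  fun i k => if (i : ℕ) < N₂ then MvPolynomial.X k ^ 2 * MvPolynomial.C (z k ^ (i : ℕ))
    else MvPolynomial.C ((starRingEnd ℂ) (z k) ^ (N - 1) * z k ^ ((i : ℕ) - N₂))

lemma revM_mul_apply_s11 {m : ℕ} {n' : Type*} [Fintype n'] (M : Matrix (Fin m) n' ℂ)
    (i : Fin m) (b : n') :
    (revM m * M) i b = M ⟨m - 1 - i.1, by have := i.2; omega⟩ b := by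
  have him := i.2
  simp only [Matrix.mul_apply, revM]
  rw [Finset.sum_eq_single (⟨m - 1 - i.1, by omega⟩ : Fin m)]
  · rw [if_pos (by simp; omega), one_mul]
  · intro a _ ha
    rw [if_neg, zero_mul]
    intro hcon
    exact ha (Fin.ext (by have := a.2; simp at hcon ⊢; omega))
  · intro hcon; exact absurd (Finset.mem_univ _) hcon

lemma mul_revM_apply_s11 {n : ℕ} {m' : Type*} [Fintype m'] (M : Matrix m' (Fin n) ℂ)
    (a : m') (j : Fin n) :
    (M * revM n) a j = M a ⟨n - 1 - j.1, by have := j.2; omega⟩ := by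
  have hjn := j.2
  simp only [Matrix.mul_apply, revM]
  rw [Finset.sum_eq_single (⟨n - 1 - j.1, by omega⟩ : Fin n)]
  · rw [if_pos (by simp; omega), mul_one]
  · intro b _ hb
    rw [if_neg, mul_zero]
    intro hcon
    exact hb (Fin.ext (by have := b.2; simp at hcon ⊢; omega))
  · intro hcon; exact absurd (Finset.mem_univ _) hcon

lemma dHankel_factor {N N₁ N₂ K : ℕ} (h : N₁ + N₂ = N + 1) (hN₁ : 0 < N₁) (hN₂ : 0 < N₂)
    (z w : Fin K → ℂ) (hzu : ∀ k, ‖z k‖ = 1) (r : Fin K → ℝ) :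
    dHankel N₁ N₂ h (fun j : Fin N => ∑ k, (r k : ℂ) * w k * z k ^ (j : ℕ))
      = vandM N₁ z * bMat N N₂ z w r := by
  ext j c
  cases c with
  | inl l =>
    simp only [dHankel, Matrix.fromCols_apply_inl]
    simp only [hankelM, Matrix.mul_apply, vandM, bMat, Sum.elim_inl]
    refine Finset.sum_congr rfl fun k _ => ?_
    show (r k : ℂ) * w k * z k ^ ((j:ℕ) + (l:ℕ)) = _
    rw [pow_add]; ring
  | inr l =>
    simp only [dHankel, Matrix.fromCols_apply_inr]
    rw [mul_revM_apply_s11, revM_mul_apply_s11]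
    simp only [Matrix.map_apply, hankelM]
    rw [map_sum]
    simp only [Matrix.mul_apply, vandM, bMat, Sum.elim_inr]
    refine Finset.sum_congr rfl fun k _ => ?_
    rw [_root_.map_mul, _root_.map_pow, _root_.map_mul]
    have hj := j.2; have hl := l.2
    have hzc : z k * (starRingEnd ℂ) (z k) = 1 := by
      rw [Complex.mul_conj, Complex.normSq_eq_norm_sq, hzu k]; norm_num
    have key : z k ^ (j:ℕ) * z k ^ (l:ℕ) * (starRingEnd ℂ) (z k) ^ ((j:ℕ)+(l:ℕ)) = 1 := by
      rw [← pow_add, ← mul_pow, hzc, one_pow]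
    have hNsplit : (starRingEnd ℂ) (z k) ^ (N-1)
        = (starRingEnd ℂ) (z k) ^ ((j:ℕ)+(l:ℕ))
          * (starRingEnd ℂ) (z k) ^ ((N₁ - 1 - (j:ℕ)) + (N₂ - 1 - (l:ℕ))) := by
      rw [← pow_add]; congr 1; omega
    rw [hNsplit]
    linear_combination (-((starRingEnd ℂ) ((r k : ℂ)) * (starRingEnd ℂ) (w k)
      * (starRingEnd ℂ) (z k) ^ ((N₁ - 1 - (j:ℕ)) + (N₂ - 1 - (l:ℕ))))) * key

lemma polyQ_det_ne_zero {N N₂ K : ℕ} (hK1 : N₂ < K) (z : Fin K → ℂ)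
    (hz : Function.Injective z) (hz0 : ∀ k, z k ≠ 0) :
    (polyQ N N₂ z).det ≠ 0 := by
  intro h0
  have hKm : N₂ + (K - N₂) = K := by omega
  set m := K - N₂ with hm
  set v₀ : Fin K → ℂ := fun k => if (k : ℕ) < N₂ then 1 else 0 with hv₀
  have hev : MvPolynomial.eval v₀ (polyQ N N₂ z).det = 0 := by rw [h0, map_zero]
  apply absurd hev
  rw [RingHom.map_det, RingHom.mapMatrix_apply]
  set M₀ := (polyQ N N₂ z).map (MvPolynomial.eval v₀) with hM₀
  set e : Fin N₂ ⊕ Fin m ≃ Fin K := finSumFinEquiv.trans (finCongr hKm) with he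
  have hcoel : ∀ j : Fin N₂, ((e (Sum.inl j)) : ℕ) = (j : ℕ) := fun j => by
    simp [he, finSumFinEquiv_apply_left]
  have hcoer : ∀ j : Fin m, ((e (Sum.inr j)) : ℕ) = N₂ + (j : ℕ) := fun j => by
    simp [he, finSumFinEquiv_apply_right]
  rw [← Matrix.det_submatrix_equiv_self e M₀,
    ← Matrix.fromBlocks_toBlocks (M₀.submatrix e e)]
  have h12 : (M₀.submatrix e e).toBlocks₁₂ = 0 := by
    ext i k
    simp only [Matrix.toBlocks₁₂, Matrix.submatrix_apply, Matrix.of_apply, hM₀,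
      Matrix.map_apply, polyQ, Matrix.zero_apply]
    rw [if_pos (by rw [hcoel]; exact i.2)]
    rw [_root_.map_mul, _root_.map_pow, MvPolynomial.eval_X, MvPolynomial.eval_C]
    simp only [hv₀, hcoer k]
    rw [if_neg (by omega : ¬ (N₂ + (k:ℕ) < N₂))]
    ring
  have h11 : (M₀.submatrix e e).toBlocks₁₁
      = (Matrix.vandermonde (fun i : Fin N₂ => z (e (Sum.inl i)))).transpose := by
    ext i k
    simp only [Matrix.toBlocks₁₁, Matrix.submatrix_apply, Matrix.of_apply, hM₀,
      Matrix.map_apply, polyQ, Matrix.transpose_apply, Matrix.vandermonde]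
    rw [if_pos (by rw [hcoel]; exact i.2)]
    rw [_root_.map_mul, _root_.map_pow, MvPolynomial.eval_X, MvPolynomial.eval_C]
    simp only [hv₀, hcoel k, hcoel i]
    rw [if_pos k.2]
    ring
  have h22 : (M₀.submatrix e e).toBlocks₂₂
      = Matrix.of fun (i k : Fin m) =>
          ((starRingEnd ℂ) (z (e (Sum.inr k))) ^ (N - 1))
            * (Matrix.vandermonde (fun i : Fin m => z (e (Sum.inr i)))).transpose i k := by
    ext i k
    simp only [Matrix.toBlocks₂₂, Matrix.submatrix_apply, Matrix.of_apply, hM₀,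
      Matrix.map_apply, polyQ, Matrix.transpose_apply, Matrix.vandermonde]
    rw [if_neg (by rw [hcoer]; omega)]
    rw [MvPolynomial.eval_C]
    congr 2
    rw [hcoer i]
    omega
  rw [h12, Matrix.det_fromBlocks_zero₁₂, h11, h22]
  apply mul_ne_zero
  · rw [Matrix.det_transpose]
    exact Matrix.det_vandermonde_ne_zero_iff.mpr
      (fun a b hab => Sum.inl_injective (e.injective (hz hab)))
  · rw [Matrix.det_mul_row, Matrix.det_transpose]
    apply mul_ne_zero
    · exact Finset.prod_ne_zero_iff.mpr fun k _ => pow_ne_zero _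
        (fun hc => hz0 _ ((starRingEnd ℂ).injective (by rw [hc, map_zero])))
    · exact Matrix.det_vandermonde_ne_zero_iff.mpr
        (fun a b hab => Sum.inr_injective (e.injective (hz hab)))

lemma deterministic {N N₁ N₂ K : ℕ} (h : N₁ + N₂ = N + 1) (hN₁ : 0 < N₁) (hN₂ : 0 < N₂)
    (hK1 : N₂ < K) (hK2 : K ≤ N₁ - 1) (hK3 : K ≤ 2 * N₂)
    (z : Fin K → ℂ) (hz : Function.Injective z) (hzu : ∀ k, ‖z k‖ = 1)
    (r : Fin K → ℝ) (hr : ∀ k, 0 < r k) (w : Fin K → ℂ) (hw : ∀ k, ‖w k‖ = 1)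
    (hev : MvPolynomial.eval w (polyQ N N₂ z).det ≠ 0) :
    (dHankel N₁ N₂ h (fun j : Fin N => ∑ k, (r k : ℂ) * w k * z k ^ (j : ℕ))).rank = K ∧
      LinearMap.range (dHankel N₁ N₂ h
          (fun j : Fin N => ∑ k, (r k : ℂ) * w k * z k ^ (j : ℕ))).mulVecLin
        = LinearMap.range (vandM N₁ z).mulVecLin := by
  have hKN₁ : K ≤ N₁ := by omega
  set ρ : Fin K → (Fin N₂ ⊕ Fin N₂) := fun i =>
    if hc : (i : ℕ) < N₂ then Sum.inl ⟨i, hc⟩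
    else Sum.inr ⟨(i : ℕ) - N₂, by have := i.2; omega⟩ with hρ
  set B := bMat N N₂ z w r with hB
  set Cmat : Matrix (Fin K) (Fin K) ℂ := fun i k => B k (ρ i) with hCmat
  have hCfact : Cmat = ((polyQ N N₂ z).map (MvPolynomial.eval w))
      * Matrix.diagonal (fun k => (r k : ℂ) * (starRingEnd ℂ) (w k)) := by
    ext i k
    rw [Matrix.mul_diagonal, Matrix.map_apply]
    have hwc : w k * (starRingEnd ℂ) (w k) = 1 := by
      rw [Complex.mul_conj, Complex.normSq_eq_norm_sq, hw k]; norm_num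
    by_cases hc : (i : ℕ) < N₂
    · simp only [hCmat, hρ, dif_pos hc, hB, bMat, Sum.elim_inl, polyQ, if_pos hc,
        _root_.map_mul, _root_.map_pow, MvPolynomial.eval_X, MvPolynomial.eval_C]
      show (r k : ℂ) * w k * z k ^ (i : ℕ) = w k ^ 2 * z k ^ (i : ℕ)
        * ((r k : ℂ) * (starRingEnd ℂ) (w k))
      linear_combination (-((r k : ℂ) * z k ^ (i : ℕ) * w k)) * hwc
    · simp only [hCmat, hρ, dif_neg hc, hB, bMat, Sum.elim_inr, polyQ, if_neg hc,
        MvPolynomial.eval_C]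
      show (starRingEnd ℂ) ((r k : ℂ) * w k) * (starRingEnd ℂ) (z k) ^ (N - 1)
          * z k ^ ((i : ℕ) - N₂)
        = (starRingEnd ℂ) (z k) ^ (N - 1) * z k ^ ((i : ℕ) - N₂)
          * ((r k : ℂ) * (starRingEnd ℂ) (w k))
      rw [_root_.map_mul, Complex.conj_ofReal]
      ring
  have hdetC : Cmat.det ≠ 0 := by
    rw [hCfact, Matrix.det_mul, Matrix.det_diagonal, ← RingHom.mapMatrix_apply,
      ← RingHom.map_det]
    apply mul_ne_zero hev
    refine Finset.prod_ne_zero_iff.mpr fun k _ => mul_ne_zero ?_ ?_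
    · exact_mod_cast (hr k).ne'
    · have hwk : w k ≠ 0 := by
        intro h0; have := hw k; rw [h0] at this; simp at this
      exact fun h0 => hwk ((starRingEnd ℂ).injective (by rw [h0, map_zero]))
  have hBsurj : Function.Surjective B.mulVecLin := by
    intro x
    have hCTunit : IsUnit Cmat.transpose.det :=
      isUnit_iff_ne_zero.mpr (by rwa [Matrix.det_transpose])
    set wv := Cmat.transpose⁻¹ *ᵥ x with hwv
    refine ⟨fun c => ∑ i, if ρ i = c then wv i else 0, ?_⟩
    have hstep : B *ᵥ (fun c => ∑ i, if ρ i = c then wv i else 0)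
        = Cmat.transpose *ᵥ wv := by
      funext k'
      simp only [Matrix.mulVec, dotProduct]
      calc ∑ c, B k' c * ∑ i, (if ρ i = c then wv i else 0)
          = ∑ c, ∑ i, (if ρ i = c then B k' c * wv i else 0) := by
            refine Finset.sum_congr rfl fun c _ => ?_
            rw [Finset.mul_sum]
            refine Finset.sum_congr rfl fun i _ => ?_
            split <;> simp
        _ = ∑ i, ∑ c, (if ρ i = c then B k' c * wv i else 0) := Finset.sum_comm
        _ = ∑ i, B k' (ρ i) * wv i := by
            refine Finset.sum_congr rfl fun i _ => ?_
            rw [Finset.sum_ite_eq]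
            simp
        _ = ∑ i, Cmat.transpose k' i * wv i := rfl
    show B.mulVecLin _ = x
    rw [Matrix.mulVecLin_apply, hstep, hwv, Matrix.mulVec_mulVec,
      Matrix.mul_nonsing_inv _ hCTunit, Matrix.one_mulVec]
  have hAinj : Function.Injective (vandM N₁ z).mulVecLin := by
    rw [← LinearMap.ker_eq_bot, LinearMap.ker_eq_bot']
    intro x hx
    set V : Matrix (Fin K) (Fin K) ℂ := fun i k => z k ^ (i : ℕ) with hV
    have hVdet : V.det ≠ 0 := by
      have hVt : V = (Matrix.vandermonde z).transpose := rfl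
      rw [hVt, Matrix.det_transpose]
      exact Matrix.det_vandermonde_ne_zero_iff.mpr hz
    apply Matrix.eq_zero_of_mulVec_eq_zero hVdet
    funext i
    have hxi : (vandM N₁ z *ᵥ x) (Fin.castLE hKN₁ i) = 0 := by
      rw [← Matrix.mulVecLin_apply, hx]; rfl
    simpa [Matrix.mulVec, dotProduct, vandM, hV] using hxi
  have hfact := dHankel_factor h hN₁ hN₂ z w hzu r
  have hrange : LinearMap.range (dHankel N₁ N₂ h
      (fun j : Fin N => ∑ k, (r k : ℂ) * w k * z k ^ (j : ℕ))).mulVecLin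
      = LinearMap.range (vandM N₁ z).mulVecLin := by
    rw [hfact, Matrix.mulVecLin_mul]
    exact LinearMap.range_comp_of_range_eq_top _ (LinearMap.range_eq_top.mpr hBsurj)
  refine ⟨?_, hrange⟩
  rw [Matrix.rank, hrange, LinearMap.finrank_range_of_inj hAinj,
    Module.finrank_fintype_fun_eq_card, Fintype.card_fin]


/- On `Fin K → AddCircle 1`, `volume` is the Haar (probability) measure on the
`K`-dimensional torus; a point `u` on the torus is turned into a point of the unit
circle in `ℂ` by `AddCircle.toCircle`. -/
theorem statement11 (N N₁ N₂ K : ℕ) (hN : 0 < N) (hN₁ : 0 < N₁) (hN₂ : 0 < N₂) (hK : 0 < K)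
    (h : N₁ + N₂ = N + 1) (hK1 : N₂ < K) (hK2 : K ≤ N₁ - 1) (hK3 : K ≤ 2 * N₂)
    (z : Fin K → ℂ) (hz : Function.Injective z) (hzu : ∀ k, ‖z k‖ = 1)
    (r : Fin K → ℝ) (hr : ∀ k, 0 < r k)
    (Ωp : Type) [MeasureSpace Ωp] (hprob : IsProbabilityMeasure (volume : Measure Ωp))
    (u : Ωp → Fin K → AddCircle (1 : ℝ)) (hu : Measurable u)
    (habs : Measure.map u volume ≪ (volume : Measure (Fin K → AddCircle (1 : ℝ)))) :
    ∀ᵐ ω ∂(volume : Measure Ωp),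
      (dHankel N₁ N₂ h
          (fun j : Fin N => ∑ k, (r k : ℂ) * (AddCircle.toCircle (u ω k) : ℂ) * z k ^ (j : ℕ))).rank
          = K ∧
        LinearMap.range (dHankel N₁ N₂ h
          (fun j : Fin N => ∑ k, (r k : ℂ) * (AddCircle.toCircle (u ω k) : ℂ) * z k ^ (j : ℕ))).mulVecLin
          = LinearMap.range (vandM N₁ z).mulVecLin := by
  classical
  haveI := addCircle_noAtoms
  have hz0 : ∀ k, z k ≠ 0 := fun k h0 => by
    have := hzu k; rw [h0] at this; simp at this
  have hP : (polyQ N N₂ z).det ≠ 0 := polyQ_det_ne_zero hK1 z hz hz0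
  have hnull := torus_null K (polyQ N N₂ z).det hP
  set E : Set (Fin K → AddCircle (1 : ℝ)) :=
    {v | MvPolynomial.eval (fun k => ((AddCircle.toCircle (v k) : Circle) : ℂ))
      (polyQ N N₂ z).det = 0} with hE
  have hEm : MeasurableSet E := measurable_evalP _ (measurableSet_singleton 0)
  have hpre : (volume : Measure Ωp) (u ⁻¹' E) = 0 := by
    have hmap : Measure.map u volume E = 0 := habs hnull
    rwa [Measure.map_apply hu hEm] at hmap
  have hae : ∀ᵐ ω ∂(volume : Measure Ωp), u ω ∉ E := by
    have hset : {ω | ¬ u ω ∉ E} = u ⁻¹' E := by ext ω; simp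
    rw [ae_iff, hset]; exact hpre
  filter_upwards [hae] with ω hω
  have hw : ∀ k, ‖((AddCircle.toCircle (u ω k) : Circle) : ℂ)‖ = 1 :=
    fun k => Circle.norm_coe _
  exact deterministic h hN₁ hN₂ hK1 hK2 hK3 z hz hzu r hr
    (fun k => ((AddCircle.toCircle (u ω k) : Circle) : ℂ)) hw hω
end

section
/- (2-D double Hankel decomposition.) Let N₁, N₂ be positive integers and write N₁ = N_{1,1} + N_{1,2} − 1, N₂ = N_{2,1} + N_{2,2} − 1. Let y ∈ ℂ^{N₁×N₂} with y_{j₁,j₂} = Σ_{k=1}^K s_k · z_{k,1}^{j₁−1} · z_{k,2}^{j₂−1}, where |z_{k,1}| = |z_{k,2}| = 1 for all k. Let H(y) be the (N_{1,1}·N_{2,1}) × (N_{1,2}·N_{2,2}) 2-level Hankel matrix with entry at row index (j₁,j₂) and column index (l₁,l₂) equal to y_{j₁+l₁−1, j₂+l₂−1}, and for l = 1,2 let 𝐉_l = J_{N_{1,l}} ⊗ J_{N_{2,l}} (Kronecker product of reversal matrices). For l = 1,2 let A_l = A_{N_{1,l}}(z_{·,1}) ⋆ A_{N_{2,l}}(z_{·,2})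 be the Khatri–Rao (column-wise Kronecker) product of the Vandermonde matrices in the two dimensions, S = diag(s₁,…,s_K), and Z_d = diag(z_{1,d},…,z_{K,d}) for d = 1,2. Then H(y) = A₁·S·A₂ᵀ, 𝐉₁·conj(H(y))·𝐉₂ = A₁·conj(S)·Z₁^{1−N₁}·Z₂^{1−N₂}·A₂ᵀ, and consequently rank([H(y) | 𝐉₁·conj(H(y))·𝐉₂]) ≤ K. -/
open Matrix
open scoped Kronecker

/-- The 2-level Hankel matrix of a 2-D signal `y ∈ ℂ^{N₁ × N₂}`, of size
`(N₁₁·N₂₁) × (N₁₂·N₂₂)` where `N₁₁ + N₁₂ = N₁ + 1` and `N₂₁ + N₂₂ = N₂ + 1`: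
the entry at row `(j₁, j₂)` and column `(l₁, l₂)` is `y_{j₁+l₁, j₂+l₂}`
(0-based indexing). -/
noncomputable def hankel2 {N₁ N₂ : ℕ} (N11 N12 N21 N22 : ℕ)
    (h1 : N11 + N12 = N₁ + 1) (h2 : N21 + N22 = N₂ + 1)
    (y : Fin N₁ → Fin N₂ → ℂ) :
    Matrix (Fin N11 × Fin N21) (Fin N12 × Fin N22) ℂ :=
  fun p q => y ⟨p.1.1 + q.1.1, by have := p.1.2; have := q.1.2; omega⟩
               ⟨p.2.1 + q.2.1, by have := p.2.2; have := q.2.2; omega⟩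

/-- The Khatri–Rao (column-wise Kronecker) product of the two Vandermonde matrices
`A_{m₁}(z₁)` and `A_{m₂}(z₂)`: its `k`-th column is the Kronecker product of the
`k`-th columns, i.e. a sampled 2-D sinusoid with pole `(z₁ₖ, z₂ₖ)`. -/
noncomputable def krVand (m₁ m₂ : ℕ) {K : ℕ} (z₁ z₂ : Fin K → ℂ) :
    Matrix (Fin m₁ × Fin m₂) (Fin K) ℂ :=
  fun p k => z₁ k ^ (p.1 : ℕ) * z₂ k ^ (p.2 : ℕ)

lemma kronRev_mul {m m' : ℕ} {n : Type*} (M : Matrix (Fin m × Fin m') n ℂ) :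
    (revM m ⊗ₖ revM m') * M = M.submatrix (fun p => (p.1.rev, p.2.rev)) id := by
  ext p q
  have hp1 := p.1.2; have hp2 := p.2.2
  rw [Matrix.mul_apply]
  rw [Finset.sum_eq_single (⟨p.1.rev, p.2.rev⟩ : Fin m × Fin m')]
  · simp only [revM, Fin.rev, kroneckerMap_apply, Matrix.submatrix_apply, id]
    rw [if_pos (by omega), if_pos (by omega)]
    simp
  · rintro ⟨a, b⟩ _ hb
    suffices h : revM m p.1 a * revM m' p.2 b = 0 by
      simp only [kroneckerMap_apply]; simp [h]
    by_contra hne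
    apply hb
    have h1 : p.1.1 + a.1 + 1 = m := by
      by_contra h; simp [revM, h] at hne
    have h2 : p.2.1 + b.1 + 1 = m' := by
      by_contra h; simp [revM, h] at hne
    have ha : a = p.1.rev := by apply Fin.ext; simp [Fin.rev]; omega
    have hbb : b = p.2.rev := by apply Fin.ext; simp [Fin.rev]; omega
    simp [Prod.ext_iff, ha, hbb]
  · simp

lemma mul_kronRev {m m' : ℕ} {n : Type*} [Fintype n] (M : Matrix n (Fin m × Fin m') ℂ) :
    M * (revM m ⊗ₖ revM m') = M.submatrix id (fun p => (p.1.rev, p.2.rev)) := by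
  ext q p
  have hp1 := p.1.2; have hp2 := p.2.2
  rw [Matrix.mul_apply]
  rw [Finset.sum_eq_single (⟨p.1.rev, p.2.rev⟩ : Fin m × Fin m')]
  · simp only [revM, Fin.rev, kroneckerMap_apply, Matrix.submatrix_apply, id]
    rw [if_pos (by omega), if_pos (by omega)]
    simp
  · rintro ⟨a, b⟩ _ hb
    suffices h : revM m a p.1 * revM m' b p.2 = 0 by
      simp only [kroneckerMap_apply]; simp [h]
    by_contra hne
    apply hb
    have h1 : a.1 + p.1.1 + 1 = m := by
      by_contra h; simp [revM, h] at hne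
    have h2 : b.1 + p.2.1 + 1 = m' := by
      by_contra h; simp [revM, h] at hne
    have ha : a = p.1.rev := by apply Fin.ext; simp [Fin.rev]; omega
    have hbb : b = p.2.rev := by apply Fin.ext; simp [Fin.rev]; omega
    simp [Prod.ext_iff, ha, hbb]
  · simp

lemma pow_rev_eq (w : ℂ) (hw : w ≠ 0) (a b N : ℕ) (h : a + b + 1 ≤ N) :
    (w ^ (N - 1 - a - b))⁻¹ = w ^ a * w ^ ((1:ℤ) - N) * w ^ b := by
  rw [← zpow_natCast w a, ← zpow_natCast w b, ← zpow_add₀ hw, ← zpow_add₀ hw,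
    ← zpow_natCast w (N - 1 - a - b), ← _root_.zpow_neg]
  congr 1
  omega

theorem statement19 (N₁ N₂ N11 N12 N21 N22 K : ℕ)
    (hN11 : 0 < N11) (hN12 : 0 < N12) (hN21 : 0 < N21) (hN22 : 0 < N22) (hK : 0 < K)
    (h1 : N11 + N12 = N₁ + 1) (h2 : N21 + N22 = N₂ + 1)
    (z₁ z₂ : Fin K → ℂ) (hz₁ : ∀ k, ‖z₁ k‖ = 1)
    (hz₂ : ∀ k, ‖z₂ k‖ = 1) (s : Fin K → ℂ)
    (y : Fin N₁ → Fin N₂ → ℂ)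
    (hy : ∀ (j₁ : Fin N₁) (j₂ : Fin N₂),
      y j₁ j₂ = ∑ k, s k * z₁ k ^ (j₁ : ℕ) * z₂ k ^ (j₂ : ℕ)) :
    hankel2 N11 N12 N21 N22 h1 h2 y =
        krVand N11 N21 z₁ z₂ * Matrix.diagonal s * (krVand N12 N22 z₁ z₂)ᵀ ∧
      (revM N11 ⊗ₖ revM N21) * (hankel2 N11 N12 N21 N22 h1 h2 y).map (starRingEnd ℂ) *
          (revM N12 ⊗ₖ revM N22) =
        krVand N11 N21 z₁ z₂ * Matrix.diagonal (fun k => starRingEnd ℂ (s k)) *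
          Matrix.diagonal (fun k => z₁ k ^ ((1 : ℤ) - (N₁ : ℤ))) *
          Matrix.diagonal (fun k => z₂ k ^ ((1 : ℤ) - (N₂ : ℤ))) *
          (krVand N12 N22 z₁ z₂)ᵀ ∧
      (Matrix.fromCols (hankel2 N11 N12 N21 N22 h1 h2 y)
          ((revM N11 ⊗ₖ revM N21) *
            (hankel2 N11 N12 N21 N22 h1 h2 y).map (starRingEnd ℂ) *
            (revM N12 ⊗ₖ revM N22))).rank ≤ K := by
  have hz₁' : ∀ k, z₁ k ≠ 0 := fun k => by
    intro h; have := hz₁ k; rw [h] at this; simp at this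
  have hz₂' : ∀ k, z₂ k ≠ 0 := fun k => by
    intro h; have := hz₂ k; rw [h] at this; simp at this
  have hc₁ : ∀ k, starRingEnd ℂ (z₁ k) = (z₁ k)⁻¹ := fun k =>
    (Complex.inv_eq_conj (hz₁ k)).symm
  have hc₂ : ∀ k, starRingEnd ℂ (z₂ k) = (z₂ k)⁻¹ := fun k =>
    (Complex.inv_eq_conj (hz₂ k)).symm
  have part1 : hankel2 N11 N12 N21 N22 h1 h2 y =
      krVand N11 N21 z₁ z₂ * Matrix.diagonal s * (krVand N12 N22 z₁ z₂)ᵀ := by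
    ext p q
    simp only [Matrix.mul_apply, Matrix.diagonal_apply, Matrix.transpose_apply,
      hankel2, krVand, hy, ite_mul, mul_ite, mul_zero, zero_mul,
      Finset.sum_ite_eq, Finset.sum_ite_eq', Finset.mem_univ, if_true]
    refine Finset.sum_congr rfl fun k _ => ?_
    simp only [pow_add]
    ring
  have part2 : (revM N11 ⊗ₖ revM N21) *
        (hankel2 N11 N12 N21 N22 h1 h2 y).map (starRingEnd ℂ) *
        (revM N12 ⊗ₖ revM N22) =
      krVand N11 N21 z₁ z₂ * Matrix.diagonal (fun k => starRingEnd ℂ (s k)) *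
        Matrix.diagonal (fun k => z₁ k ^ ((1 : ℤ) - (N₁ : ℤ))) *
        Matrix.diagonal (fun k => z₂ k ^ ((1 : ℤ) - (N₂ : ℤ))) *
        (krVand N12 N22 z₁ z₂)ᵀ := by
    rw [kronRev_mul, mul_kronRev]
    ext p q
    have hp1 := p.1.2; have hp2 := p.2.2; have hq1 := q.1.2; have hq2 := q.2.2
    simp only [Matrix.submatrix_apply, Matrix.map_apply, id, hankel2, hy,
      Matrix.mul_apply, Matrix.diagonal_apply, Matrix.transpose_apply, krVand, map_sum,
      ite_mul, mul_ite, mul_zero, zero_mul,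
      Finset.sum_ite_eq, Finset.sum_ite_eq', Finset.mem_univ, if_true]
    refine Finset.sum_congr rfl fun k _ => ?_
    simp only [_root_.map_mul, map_pow, hc₁ k, hc₂ k, Fin.rev, inv_pow]
    have he₁ : (N11 - (p.1.1 + 1)) + (N12 - (q.1.1 + 1)) = N₁ - 1 - p.1.1 - q.1.1 := by
      omega
    have he₂ : (N21 - (p.2.1 + 1)) + (N22 - (q.2.1 + 1)) = N₂ - 1 - p.2.1 - q.2.1 := by
      omega
    rw [he₁, he₂, pow_rev_eq (z₁ k) (hz₁' k) p.1.1 q.1.1 N₁ (by omega),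
      pow_rev_eq (z₂ k) (hz₂' k) p.2.1 q.2.1 N₂ (by omega)]
    ring
  refine ⟨part1, part2, ?_⟩
  rw [part2, part1, Matrix.mul_assoc, Matrix.mul_assoc, Matrix.mul_assoc,
    Matrix.mul_assoc, ← Matrix.mul_fromCols]
  exact le_trans (Matrix.rank_mul_le_left _ _)
    (le_trans (Matrix.rank_le_card_width _) (by simp))
end
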